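/- arXiv:2303.02253 — 3 statements merged into one kernel-verified Lean document; each statement's English description precedes it below -/
import Mathlib

section
/- There is at most one way to assign to every loopless matroid M a polynomial P_M(t) with integer coefficients such that: (i) if rk(M)=0 then P_M(t)=1; (ii) if rk(M)>0 then deg P_M(t) < rk(M)/2; (iii) the polynomial Z_M(t) = Σ_{F ∈ L(M)} t^{rk(F)} P_{M/F}(t) is palindromic of degree rk(M). In other words, such an assignment (P_M, Z_M) is uniquely determined by these three properties. -/
open Matroid Set Polynomial

variable {α β : Type*}

/-- Rank of a set in a matroid: size of the largest independent subset. -/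
noncomputable def Matroid.rkSet (M : Matroid α) (X : Set α) : ℕ :=
  sSup {n | ∃ I, M.Indep I ∧ I ⊆ X ∧ I.ncard = n}

/-- Rank of a matroid. -/
noncomputable def Matroid.rank (M : Matroid α) : ℕ := M.rkSet M.E

/-- Deletion of a set. -/
def Matroid.del (M : Matroid α) (D : Set α) : Matroid α := M ↾ (M.E \ D)

/-- Contraction of a set, defined by duality. -/
def Matroid.ctr (M : Matroid α) (C : Set α) : Matroid α := ((M✶).del C)✶

/-- A circuit: a minimal dependent set. -/
def Matroid.IsCct (M : Matroid α) (C : Set α) : Prop :=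
  C ⊆ M.E ∧ ¬ M.Indep C ∧ ∀ x ∈ C, M.Indep (C \ {x})

/-- A cocircuit: a circuit of the dual. -/
def Matroid.IsCocct (M : Matroid α) (C : Set α) : Prop := (M✶).IsCct C

/-- A loopless matroid. -/
def Matroid.Loopless' (M : Matroid α) : Prop := ∀ e ∈ M.E, M.Indep {e}

/-- A simple matroid: loopless and no 2-element circuits. -/
def Matroid.Simple' (M : Matroid α) : Prop :=
  M.Loopless' ∧ ∀ e ∈ M.E, ∀ f ∈ M.E, e ≠ f → M.Indep {e, f}

/-- `M'` is a parallel extension of `M`. -/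
def Matroid.IsParallelExt (M M' : Matroid α) : Prop :=
  ∃ e C, e ∈ M'.E ∧ M'.IsCct C ∧ C.ncard = 2 ∧ e ∈ C ∧ M'.del {e} = M

/-- `M'` is a series extension of `M`. -/
def Matroid.IsSeriesExt (M M' : Matroid α) : Prop :=
  ∃ e C, e ∈ M'.E ∧ M'.IsCocct C ∧ C.ncard = 2 ∧ e ∈ C ∧ M'.ctr {e} = M

/-- Series-parallel matroids: generated from a single loop or coloop by
series and parallel extensions. -/
inductive Matroid.IsSeriesParallel : Matroid α → Prop
  | loop (e : α) : Matroid.IsSeriesParallel (Matroid.loopyOn {e})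
  | coloop (e : α) : Matroid.IsSeriesParallel (Matroid.freeOn {e})
  | parallel {M M' : Matroid α} : Matroid.IsSeriesParallel M →
      M.IsParallelExt M' → Matroid.IsSeriesParallel M'
  | series {M M' : Matroid α} : Matroid.IsSeriesParallel M →
      M.IsSeriesExt M' → Matroid.IsSeriesParallel M'

/-- `N` is a minor of `M`. -/
def Matroid.IsMinorOf (N M : Matroid α) : Prop :=
  ∃ C D, C ⊆ M.E ∧ D ⊆ M.E ∧ N = (M.ctr C).del D

/-- Isomorphism of matroids on possibly different types. -/
def Matroid.IsIsoTo (M : Matroid α) (N : Matroid β) : Prop :=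
  ∃ f : α → β, Set.BijOn f M.E N.E ∧ ∀ I ⊆ M.E, (M.Indep I ↔ N.Indep (f '' I))

/-- `N` is (isomorphic to) the uniform matroid `U_{2,4}`. -/
def Matroid.IsU24 (N : Matroid β) : Prop :=
  N.E.ncard = 4 ∧ ∀ I ⊆ N.E, (N.Indep I ↔ I.ncard ≤ 2)

/-- `N` is (isomorphic to) the cycle matroid of the complete graph `K₄`. -/
def Matroid.IsMK4 (N : Matroid β) : Prop :=
  ∃ f : β → Sym2 (Fin 4), Set.BijOn f N.E {e : Sym2 (Fin 4) | ¬ e.IsDiag} ∧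
    ∀ I ⊆ N.E, (N.Indep I ↔ (SimpleGraph.fromEdgeSet (f '' I)).IsAcyclic)

/-- A quasi series-parallel matroid: no `U_{2,4}`- or `M(K₄)`-minor. -/
def Matroid.IsQuasiSP (M : Matroid α) : Prop :=
  ¬ ∃ N : Matroid α, N.IsMinorOf M ∧ (N.IsU24 ∨ N.IsMK4)

/-- One step of the connectivity relation: lying on a common circuit. -/
def Matroid.ConnStep (M : Matroid α) (e f : α) : Prop :=
  ∃ C, M.IsCct C ∧ e ∈ C ∧ f ∈ C

/-- The connected component of `e` in `M`. -/
def Matroid.comp (M : Matroid α) (e : α) : Set α :=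
  {f ∈ M.E | Relation.ReflTransGen M.ConnStep e f}

/-- A connected matroid. -/
def Matroid.IsConnected' (M : Matroid α) : Prop :=
  M.E.Nonempty ∧ ∀ e ∈ M.E, ∀ f ∈ M.E, Relation.ReflTransGen M.ConnStep e f

/-- A polynomial is palindromic of degree `d`. -/
def IsPalindromic (d : ℕ) {R : Type*} [Semiring R] (p : Polynomial R) : Prop :=
  p.natDegree = d ∧ ∀ i ≤ d, p.coeff i = p.coeff (d - i)

/-- The defining axioms of the (non-equivariant) Kazhdan–Lusztig polynomial of
matroids, for an assignment `P` of a polynomial to every matroid on `α`. -/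
def IsKLAssignment (P : Matroid α → Polynomial ℤ) : Prop :=
  (∀ M : Matroid α, M.Finite → M.Loopless' → M.rank = 0 → P M = 1) ∧
  (∀ M : Matroid α, M.Finite → M.Loopless' → 0 < M.rank →
      2 * (P M).natDegree < M.rank) ∧
  (∀ M : Matroid α, M.Finite → M.Loopless' →
      IsPalindromic M.rank (∑ᶠ F ∈ {F | M.IsFlat F}, X ^ (M.rkSet F) * P (M.ctr F)))

/-- The `Z`-polynomial associated to an assignment `P`. -/
noncomputable def ZPoly (P : Matroid α → Polynomial ℤ) (M : Matroid α) : Polynomial ℤ :=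
  ∑ᶠ F ∈ {F | M.IsFlat F}, X ^ (M.rkSet F) * P (M.ctr F)

/-- The braid matroid on `n` vertices: the cycle matroid of the complete graph `Kₙ`,
with ground set the set of non-diagonal elements of `Sym2 (Fin n)`. -/
def IsBraid (n : ℕ) (B : Matroid (Sym2 (Fin n))) : Prop :=
  B.E = {e : Sym2 (Fin n) | ¬ e.IsDiag} ∧
  ∀ I ⊆ B.E, (B.Indep I ↔ (SimpleGraph.fromEdgeSet I).IsAcyclic)

/-- Stirling numbers of the second kind. -/
def stirling2 : ℕ → ℕ → ℕ
  | 0, 0 => 1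
  | 0, _ + 1 => 0
  | _ + 1, 0 => 0
  | n + 1, k + 1 => (k + 1) * stirling2 n (k + 1) + stirling2 n k

/-- A triangular cactus: a connected graph in which every edge lies in a (unique)
cycle, and every cycle is a triangle. -/
def IsTriangularCactus {V : Type*} (G : SimpleGraph V) : Prop :=
  G.Connected ∧
  (∀ e ∈ G.edgeSet, ∃ (v : V) (w : G.Walk v v), w.IsCycle ∧ w.length = 3 ∧ e ∈ w.edges) ∧
  (∀ (v : V) (w : G.Walk v v), w.IsCycle → w.length = 3)


section Aux

variable {M : Matroid α} {I J X C F B' : Set α} {e : α}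

lemma Matroid.ctr_ground (M : Matroid α) (C : Set α) : (M.ctr C).E = M.E \ C := rfl

lemma Matroid.ctr_empty (M : Matroid α) : M.ctr ∅ = M := by
  rw [Matroid.ctr, Matroid.del, diff_empty, restrict_ground_eq_self, dual_dual]

lemma Matroid.ctr_finite (hM : M.Finite) (C : Set α) : (M.ctr C).Finite :=
  ⟨hM.ground_finite.subset (by rw [Matroid.ctr_ground]; exact diff_subset)⟩

lemma Matroid.rkSet_eq_ncard_of_basis' (hM : M.E.Finite) (hI : M.IsBasis' I X) :
    M.rkSet X = I.ncard := by
  have hset : {n | ∃ J, M.Indep J ∧ J ⊆ X ∧ J.ncard = n} = Set.Iic I.ncard := by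
    ext n
    simp only [Set.mem_setOf_eq, Set.mem_Iic]
    constructor
    · rintro ⟨J, hJ, hJX, rfl⟩
      obtain ⟨I', hI', hJI'⟩ := hJ.subset_isBasis'_of_subset hJX
      have hcard : I'.ncard = I.ncard := by
        have := hI'.encard_eq_encard hI
        simp [Set.ncard_def, this]
      exact le_of_le_of_eq
        (Set.ncard_le_ncard hJI' (hM.subset hI'.indep.subset_ground)) hcard
    · intro hn
      obtain ⟨J, hJI, hJcard⟩ := Set.exists_subset_card_eq (s := I) hn
      exact ⟨J, hI.indep.subset hJI, hJI.trans hI.subset, hJcard⟩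
  rw [Matroid.rkSet, hset, csSup_Iic]

lemma Matroid.le_rkSet (hM : M.E.Finite) (hJ : M.Indep J) (hJX : J ⊆ X) :
    J.ncard ≤ M.rkSet X := by
  obtain ⟨I, hI⟩ := M.exists_isBasis' X
  rw [Matroid.rkSet_eq_ncard_of_basis' hM hI]
  obtain ⟨I', hI', hJI'⟩ := hJ.subset_isBasis'_of_subset hJX
  have hcard : I'.ncard = I.ncard := by
    have := hI'.encard_eq_encard hI
    simp [Set.ncard_def, this]
  exact le_of_le_of_eq (Set.ncard_le_ncard hJI' (hM.subset hI'.indep.subset_ground)) hcard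

lemma Matroid.rkSet_empty (M : Matroid α) : M.rkSet ∅ = 0 := by
  have hset : {n | ∃ I, M.Indep I ∧ I ⊆ (∅ : Set α) ∧ I.ncard = n} = {0} := by
    ext n
    simp only [Set.mem_setOf_eq, Set.subset_empty_iff, Set.mem_singleton_iff]
    constructor
    · rintro ⟨I, -, rfl, rfl⟩; simp
    · rintro rfl; exact ⟨∅, M.empty_indep, rfl, by simp⟩
  rw [Matroid.rkSet, hset, csSup_singleton]

lemma Matroid.flat_empty (hM : M.Loopless') : M.IsFlat ∅ := by
  refine ⟨fun I X hIF hIX => ?_, empty_subset _⟩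
  have hI : I = ∅ := subset_empty_iff.mp hIF.subset
  subst hI
  intro x hx
  have hxE : x ∈ M.E := hIX.subset_ground hx
  exact absurd (hM x hxE)
    (by simpa using (hIX.isBasis').insert_not_indep ⟨hx, Set.notMem_empty x⟩)

lemma Matroid.ctr_base_iff (hC : C ⊆ M.E) :
    (M.ctr C).IsBase B' ↔ ∃ B, M.IsBase B ∧ M.IsBasis (B ∩ C) C ∧ B' = B \ C := by
  have hEC : M.E \ C ⊆ M✶.E := diff_subset
  have hiff : (M.ctr C).IsBase B' ↔
      M✶.IsBasis ((M.E \ C) \ B') (M.E \ C) ∧ B' ⊆ M.E \ C := by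
    rw [Matroid.ctr, Matroid.del, dual_isBase_iff', isBase_restrict_iff']
    simp only [restrict_ground_eq, dual_ground]
    rw [isBasis'_iff_isBasis hEC]
  rw [hiff]
  constructor
  · rintro ⟨hK, hB'⟩
    obtain ⟨Bs, hBs, hKBs⟩ := hK.indep.exists_isBase_superset
    have hBsE : Bs ⊆ M.E := hBs.subset_ground
    have hint : Bs ∩ (M.E \ C) = (M.E \ C) \ B' :=
      (hK.eq_of_subset_indep (hBs.indep.inter_right _)
        (subset_inter hKBs diff_subset) inter_subset_right).symm
    refine ⟨M.E \ Bs, hBs.compl_isBase_of_dual, ?_, ?_⟩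
    · rw [(hBs.compl_isBase_of_dual).inter_isBasis_iff_compl_inter_isBasis_dual hC,
        Set.diff_diff_cancel_left hBsE, hint]
      exact hK
    · ext x
      have h1 := Set.ext_iff.mp hint x
      have h2 : x ∈ B' → x ∈ M.E ∧ x ∉ C := fun h => hB' h
      simp only [Set.mem_inter_iff, Set.mem_diff] at h1 h2 ⊢
      tauto
  · rintro ⟨B, hB, hBC, rfl⟩
    refine ⟨?_, diff_subset_diff_left hB.subset_ground⟩
    have h := hB.compl_inter_isBasis_of_inter_isBasis hBC
    have hset : (M.E \ C) \ (B \ C) = (M.E \ B) ∩ (M.E \ C) := by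
      ext x
      simp only [Set.mem_inter_iff, Set.mem_diff]
      tauto
    rw [hset]
    exact h

lemma Matroid.rank_eq_ncard_of_base {B : Set α} (hM : M.Finite) (hB : M.IsBase B) :
    M.rank = B.ncard :=
  Matroid.rkSet_eq_ncard_of_basis' hM.ground_finite hB.isBasis_ground.isBasis'

lemma Matroid.ctr_rank_add (hM : M.Finite) (hC : C ⊆ M.E) :
    (M.ctr C).rank + M.rkSet C = M.rank := by
  obtain ⟨B', hB'⟩ := (M.ctr C).exists_isBase
  obtain ⟨B, hB, hBC, rfl⟩ := (Matroid.ctr_base_iff hC).mp hB'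
  have hBfin : B.Finite := hM.ground_finite.subset hB.subset_ground
  rw [Matroid.rank_eq_ncard_of_base (Matroid.ctr_finite hM C) hB',
    Matroid.rank_eq_ncard_of_base hM hB,
    Matroid.rkSet_eq_ncard_of_basis' hM.ground_finite hBC.isBasis',
    add_comm, Set.ncard_inter_add_ncard_diff_eq_ncard B C hBfin]

lemma Matroid.rkSet_pos (hM : M.Finite) (hl : M.Loopless') (hC : C ⊆ M.E)
    (hne : C.Nonempty) : 1 ≤ M.rkSet C := by
  obtain ⟨e, he⟩ := hne
  have := Matroid.le_rkSet hM.ground_finite (hl e (hC he))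
    (Set.singleton_subset_iff.mpr he)
  simpa using this

lemma Matroid.ctr_flat_loopless (hl : M.Loopless') (hF : M.IsFlat F) :
    (M.ctr F).Loopless' := by
  intro e he
  rw [Matroid.ctr_ground] at he
  obtain ⟨J, hJ⟩ := M.exists_isBasis F hF.subset_ground
  have heJ : e ∉ J := fun h => he.2 (hJ.subset h)
  have hins : M.Indep (insert e J) := by
    rw [hJ.indep.insert_indep_iff_of_notMem heJ, hJ.closure_eq_closure, hF.closure]
    exact he
  obtain ⟨B, hB, hIB⟩ := hins.exists_isBase_superset
  have hJB : J ⊆ B := (subset_insert e J).trans hIB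
  have hBF : B ∩ F = J :=
    (hJ.eq_of_subset_indep (hB.indep.inter_right F)
      (subset_inter hJB hJ.subset) inter_subset_right).symm
  rw [indep_iff]
  refine ⟨B \ F, (Matroid.ctr_base_iff hF.subset_ground).mpr
    ⟨B, hB, by rw [hBF]; exact hJ, rfl⟩, ?_⟩
  exact Set.singleton_subset_iff.mpr ⟨hIB (mem_insert e J), he.2⟩

lemma Matroid.flats_finite (hM : M.Finite) : {F | M.IsFlat F}.Finite :=
  hM.ground_finite.finite_subsets.subset fun _ hF => hF.subset_ground

end Aux

/-- Uniqueness of the Kazhdan–Lusztig polynomial assignment: any two assignments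
`P₁, P₂` satisfying axioms (i)–(iii) agree on every finite loopless matroid, and
hence so do the associated `Z`-polynomials. -/
theorem kl_assignment_unique {α : Type*} (P₁ P₂ : Matroid α → Polynomial ℤ)
    (h₁ : IsKLAssignment P₁) (h₂ : IsKLAssignment P₂) :
    ∀ M : Matroid α, M.Finite → M.Loopless' → P₁ M = P₂ M ∧ ZPoly P₁ M = ZPoly P₂ M := by
  obtain ⟨ha₁, hb₁, hc₁⟩ := h₁
  obtain ⟨ha₂, hb₂, hc₂⟩ := h₂
  have key : ∀ n : ℕ, ∀ M : Matroid α, M.rank ≤ n → M.Finite → M.Loopless' →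
      P₁ M = P₂ M := by
    intro n
    induction n with
    | zero =>
      intro M hr hfin hl
      rw [ha₁ M hfin hl (Nat.le_zero.mp hr), ha₂ M hfin hl (Nat.le_zero.mp hr)]
    | succ n ih =>
      intro M hr hfin hl
      rcases Nat.eq_zero_or_pos M.rank with h0 | hpos
      · rw [ha₁ M hfin hl h0, ha₂ M hfin hl h0]
      have hflats : {F | M.IsFlat F}.Finite := Matroid.flats_finite hfin
      have hsub : ∀ F, M.IsFlat F → F ≠ ∅ → P₁ (M.ctr F) = P₂ (M.ctr F) := by
        intro F hF hne
        refine ih (M.ctr F) ?_ (Matroid.ctr_finite hfin F)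
          (Matroid.ctr_flat_loopless hl hF)
        have h1 := Matroid.ctr_rank_add hfin hF.subset_ground
        have h2 : 1 ≤ M.rkSet F := Matroid.rkSet_pos hfin hl hF.subset_ground
          (nonempty_iff_ne_empty.mpr hne)
        omega
      have hZdiff : ZPoly P₁ M - ZPoly P₂ M = P₁ M - P₂ M := by
        rw [ZPoly, ZPoly, finsum_mem_eq_finite_toFinset_sum _ hflats,
          finsum_mem_eq_finite_toFinset_sum _ hflats, ← Finset.sum_sub_distrib]
        rw [Finset.sum_eq_single (∅ : Set α)]
        · rw [Matroid.ctr_empty, Matroid.rkSet_empty, pow_zero, one_mul, one_mul]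
        · intro F hFmem hFne
          have hF : M.IsFlat F := by simpa using hFmem
          rw [hsub F hF hFne, sub_self]
        · intro h
          exact absurd (by simpa using Matroid.flat_empty hl) h
      have hp₁ : IsPalindromic M.rank (ZPoly P₁ M) := hc₁ M hfin hl
      have hp₂ : IsPalindromic M.rank (ZPoly P₂ M) := hc₂ M hfin hl
      obtain ⟨hdeg₁, hco₁⟩ := hp₁
      obtain ⟨hdeg₂, hco₂⟩ := hp₂
      have hDco : ∀ i ≤ M.rank, (P₁ M - P₂ M).coeff i = (P₁ M - P₂ M).coeff (M.rank - i) := by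
        intro i hi
        rw [← hZdiff, Polynomial.coeff_sub, hco₁ i hi, hco₂ i hi, ← Polynomial.coeff_sub]
      have h1 := hb₁ M hfin hl hpos
      have h2 := hb₂ M hfin hl hpos
      have hdegD : ∀ j, M.rank ≤ 2 * j → (P₁ M - P₂ M).coeff j = 0 := by
        intro j hj
        rw [Polynomial.coeff_sub,
          Polynomial.coeff_eq_zero_of_natDegree_lt (by omega),
          Polynomial.coeff_eq_zero_of_natDegree_lt (by omega), sub_zero]
      have hD0 : P₁ M - P₂ M = 0 := by
        apply Polynomial.ext
        intro i
        rw [Polynomial.coeff_zero]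
        rcases le_or_gt M.rank (2 * i) with h | h
        · exact hdegD i h
        · rw [hDco i (by omega)]
          exact hdegD (M.rank - i) (by omega)
      exact sub_eq_zero.mp hD0
  intro M hfin hl
  refine ⟨key M.rank M le_rfl hfin hl, ?_⟩
  rw [ZPoly, ZPoly]
  refine finsum_mem_congr rfl fun F hF => ?_
  rw [key (M.ctr F).rank (M.ctr F) le_rfl (Matroid.ctr_finite hfin F)
    (Matroid.ctr_flat_loopless hl hF)]
end

section
/- Every triangular cactus with at least three vertices contains a triangle at least two of whose vertices have degree 2 in the cactus. -/
open Matroid Set Polynomial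

variable {α β : Type*}

private lemma edge_start_aux {V : Type*} {G : SimpleGraph V} {u w x : V} (q : G.Walk u w) (hq : q.IsPath)
    (he : s(u, x) ∈ q.edges) : q.getVert 1 = x := by
  cases q with
  | nil => simp at he
  | @cons _ c _ h q' =>
    rw [SimpleGraph.Walk.edges_cons, List.mem_cons] at he
    rcases he with he | he
    · rw [Sym2.eq_iff] at he
      rcases he with ⟨-, rfl⟩ | ⟨rfl, rfl⟩
      · simp [SimpleGraph.Walk.getVert_cons_succ, SimpleGraph.Walk.getVert_zero]
      · exact absurd rfl h.ne
    · exact absurd (SimpleGraph.Walk.fst_mem_support_of_mem_edges q' he)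
        ((SimpleGraph.Walk.cons_isPath_iff h q').mp hq).2

private lemma end_not_at_one {V : Type*} {G : SimpleGraph V} {u w : V} (q : G.Walk u w) (hq : q.IsPath) (h2 : 2 ≤ q.length) :
    s(w, u) ∉ q.edges := by
  intro he
  have h1 : q.getVert 1 = w := edge_start_aux q hq (by rwa [Sym2.eq_swap] at he)
  cases q with
  | nil => simp at h2
  | @cons _ c _ h q' =>
    rw [SimpleGraph.Walk.getVert_cons_succ, SimpleGraph.Walk.getVert_zero] at h1
    subst h1
    cases q' with
    | nil => simp at h2
    | cons h'' r =>
      have := ((SimpleGraph.Walk.cons_isPath_iff _ _).mp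
        ((SimpleGraph.Walk.cons_isPath_iff _ _).mp hq).1).2
      exact this r.end_mem_support

private lemma nbr_class {V : Type*} {G : SimpleGraph V} [DecidableEq V] (hcyc : ∀ (v : V) (w : G.Walk v v), w.IsCycle → w.length = 3)
    {n : ℕ} (hmax : ∀ (x y : V) (q : G.Walk x y), q.IsPath → q.length ≤ n)
    {u v : V} (p : G.Walk u v) (hp : p.IsPath) (hlen : p.length = n)
    {w : V} (hw : G.Adj u w) : w = p.getVert 1 ∨ w = p.getVert 2 := by
  have hmem : w ∈ p.support := by
    by_contra hmem
    have hp' : (SimpleGraph.Walk.cons hw.symm p).IsPath := hp.cons hmem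
    have := hmax _ _ _ hp'
    rw [SimpleGraph.Walk.length_cons, hlen] at this
    omega
  have hq : (p.takeUntil w hmem).IsPath := hp.takeUntil hmem
  have hgv : p.getVert (p.takeUntil w hmem).length = w := by
    have hsp := p.take_spec hmem
    have hga := SimpleGraph.Walk.getVert_append (p.takeUntil w hmem) (p.dropUntil w hmem)
      (p.takeUntil w hmem).length
    rw [hsp] at hga
    simpa using hga
  have h0 : (p.takeUntil w hmem).length ≠ 0 := by
    intro h
    exact hw.ne (SimpleGraph.Walk.eq_of_length_eq_zero h)
  rcases Nat.lt_or_ge (p.takeUntil w hmem).length 2 with hl | hl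
  · left
    have : (p.takeUntil w hmem).length = 1 := by omega
    rw [this] at hgv
    exact hgv.symm
  · right
    have hne : s(w, u) ∉ (p.takeUntil w hmem).edges := end_not_at_one _ hq hl
    have hc : (SimpleGraph.Walk.cons hw.symm (p.takeUntil w hmem)).IsCycle :=
      (SimpleGraph.Walk.cons_isCycle_iff _ _).mpr ⟨hq, hne⟩
    have := hcyc _ _ hc
    rw [SimpleGraph.Walk.length_cons] at this
    have : (p.takeUntil w hmem).length = 2 := by omega
    rw [this] at hgv
    exact hgv.symm

private lemma exists_triangle {V : Type*} {G : SimpleGraph V}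
    (htri : ∀ e ∈ G.edgeSet, ∃ (v : V) (w : G.Walk v v), w.IsCycle ∧ w.length = 3 ∧ e ∈ w.edges)
    {u w : V} (h : G.Adj u w) : ∃ x, G.Adj u x ∧ G.Adj w x := by
  obtain ⟨z, c, _, hl, he⟩ := htri s(u, w) h
  cases c with
  | nil => simp at hl
  | @cons _ a _ h1 c1 =>
    cases c1 with
    | nil => simp at hl
    | @cons _ b _ h2 c2 =>
      cases c2 with
      | nil => simp at hl
      | @cons _ d _ h3 c3 =>
        cases c3 with
        | cons h4 c4 => simp [SimpleGraph.Walk.length_cons] at hl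
        | nil =>
          simp only [SimpleGraph.Walk.edges_cons, SimpleGraph.Walk.edges_nil,
            List.mem_cons, List.not_mem_nil, or_false] at he
          rcases he with he | he | he <;> rw [Sym2.eq_iff] at he <;>
            rcases he with ⟨rfl, rfl⟩ | ⟨rfl, rfl⟩
          · exact ⟨b, h3.symm, h2⟩
          · exact ⟨b, h2, h3.symm⟩
          · exact ⟨z, h1.symm, h3⟩
          · exact ⟨z, h3, h1.symm⟩
          · exact ⟨a, h2.symm, h1⟩
          · exact ⟨a, h1, h2.symm⟩

private lemma no_four_cycle {V : Type*} {G : SimpleGraph V} (hcyc : ∀ (v : V) (w : G.Walk v v), w.IsCycle → w.length = 3)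
    {u a w b : V} (h1 : G.Adj u a) (h2 : G.Adj a w) (h3 : G.Adj w b) (h4 : G.Adj b u)
    (huw : u ≠ w) (hab : a ≠ b) : False := by
  have hc : (SimpleGraph.Walk.cons h1 (SimpleGraph.Walk.cons h2 (SimpleGraph.Walk.cons h3
      (SimpleGraph.Walk.cons h4 SimpleGraph.Walk.nil)))).IsCycle := by
    have hua := h1.ne
    have haw := h2.ne
    have hwb := h3.ne
    have hbu := h4.ne
    have hau := h1.ne'
    have hwa := h2.ne'
    have hbw := h3.ne'
    have hub := h4.ne'
    have hwu := huw.symm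
    have hba := hab.symm
    rw [SimpleGraph.Walk.isCycle_def]
    refine ⟨?_, by simp, ?_⟩
    · rw [SimpleGraph.Walk.isTrail_def]
      simp only [SimpleGraph.Walk.edges_cons, SimpleGraph.Walk.edges_nil, List.nodup_cons,
        List.mem_cons, List.not_mem_nil, or_false, List.nodup_nil, and_true, Sym2.eq_iff]
      push_neg
      tauto
    · simp only [SimpleGraph.Walk.support_cons, SimpleGraph.Walk.support_nil, List.tail_cons,
        List.nodup_cons, List.mem_cons, List.not_mem_nil, or_false, List.nodup_nil, and_true]
      push_neg
      tauto
  have := hcyc _ _ hc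
  simp [SimpleGraph.Walk.length_cons] at this

/-- Every triangular cactus with at least three vertices contains a triangle at least
two of whose vertices have degree `2`. -/
theorem triangularCactus_exists_pendant_triangle {V : Type*} [Finite V]
    (G : SimpleGraph V) (hG : IsTriangularCactus G) (hV : 3 ≤ Nat.card V) :
    ∃ a b c : V, G.Adj a b ∧ G.Adj b c ∧ G.Adj a c ∧
      (G.neighborSet b).ncard = 2 ∧ (G.neighborSet c).ncard = 2 := by
  obtain ⟨hconn, htri, hcyc⟩ := hG
  classical
  have : Fintype V := Fintype.ofFinite V
  have hcard : 3 ≤ Fintype.card V := by rwa [Nat.card_eq_fintype_card] at hV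
  -- three distinct vertices
  obtain ⟨x, y, z, -, -, -, hxy, hxz, hyz⟩ :=
    Finset.two_lt_card_iff.mp (show 2 < (Finset.univ : Finset V).card by simpa using (by omega : 2 < Fintype.card V))
  -- the set of path lengths
  have hSne : {m : ℕ | ∃ (a b : V) (q : G.Walk a b), q.IsPath ∧ q.length = m}.Nonempty :=
    ⟨0, x, x, SimpleGraph.Walk.nil, SimpleGraph.Walk.IsPath.nil, rfl⟩
  have hbdd : BddAbove {m : ℕ | ∃ (a b : V) (q : G.Walk a b), q.IsPath ∧ q.length = m} := by
    refine ⟨Fintype.card V, ?_⟩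
    rintro m ⟨a, b, q, hq, rfl⟩
    exact hq.length_lt.le
  set n := sSup {m : ℕ | ∃ (a b : V) (q : G.Walk a b), q.IsPath ∧ q.length = m} with hn
  have hmax : ∀ (a b : V) (q : G.Walk a b), q.IsPath → q.length ≤ n :=
    fun a b q hq => le_csSup hbdd ⟨a, b, q, hq, rfl⟩
  have key : ∀ a b : V, a ≠ b → G.Adj a b ∨ 2 ≤ n := by
    intro a b hab
    obtain ⟨w⟩ := hconn.preconnected a b
    have hp := w.bypass_isPath
    rcases Nat.lt_or_ge w.bypass.length 2 with hl | hl
    · have h0 : w.bypass.length ≠ 0 := fun h =>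
        hab (SimpleGraph.Walk.eq_of_length_eq_zero h)
      left
      exact SimpleGraph.Walk.adj_of_length_eq_one (p := w.bypass) (by omega)
    · exact Or.inr (le_trans hl (hmax _ _ _ hp))
  have h2 : 2 ≤ n := by
    rcases key x y hxy with hadjxy | h; swap; · exact h
    rcases key x z hxz with hadjxz | h; swap; · exact h
    have hpath : (SimpleGraph.Walk.cons hadjxy.symm
        (SimpleGraph.Walk.cons hadjxz SimpleGraph.Walk.nil)).IsPath := by
      simp [SimpleGraph.Walk.cons_isPath_iff, hxy.symm, hyz, hxz]
    have := hmax _ _ _ hpath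
    simpa using this
  obtain ⟨u, v, p, hp, hlen⟩ := Nat.sSup_mem hSne hbdd
  rw [← hn] at hlen
  have hlen2 : 2 ≤ p.length := hlen ▸ h2
  cases p with
  | nil => simp at hlen2
  | @cons _ a _ h1 p1 =>
    cases p1 with
    | nil => simp at hlen2
    | @cons _ b _ h2' p2 =>
      rw [SimpleGraph.Walk.cons_isPath_iff] at hp
      obtain ⟨hp1, husup⟩ := hp
      rw [SimpleGraph.Walk.cons_isPath_iff] at hp1
      obtain ⟨hp2, hasup⟩ := hp1
      have hub : u ≠ b := by
        intro h; subst h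
        exact husup (by simp [SimpleGraph.Walk.support_cons, p2.start_mem_support])
      have hua : u ≠ a := h1.ne
      have hab : a ≠ b := h2'.ne
      -- classification of neighbors of u
      have hPfull : (SimpleGraph.Walk.cons h1 (SimpleGraph.Walk.cons h2' p2)).IsPath := by
        rw [SimpleGraph.Walk.cons_isPath_iff, SimpleGraph.Walk.cons_isPath_iff]
        exact ⟨⟨hp2, hasup⟩, husup⟩
      have hclassu : ∀ w : V, G.Adj u w → w = a ∨ w = b := by
        intro w hw
        have := nbr_class hcyc hmax _ hPfull hlen hw
        simpa [SimpleGraph.Walk.getVert_cons_succ, SimpleGraph.Walk.getVert_zero] using this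
      -- u is adjacent to b (triangle through edge u-a)
      have hAdjub : G.Adj u b := by
        obtain ⟨t, hut, hat⟩ := exists_triangle htri h1
        rcases hclassu t hut with rfl | rfl
        · exact absurd rfl hat.ne
        · exact hut
      -- classification of neighbors of a
      have hclassa : ∀ w : V, G.Adj a w → w = u ∨ w = b := by
        intro w hw
        by_contra hcon
        push_neg at hcon
        obtain ⟨hwu, hwb⟩ := hcon
        have hwa : w ≠ a := hw.ne'
        by_cases hsup : w ∈ (SimpleGraph.Walk.cons h1 (SimpleGraph.Walk.cons h2' p2)).support
        · -- w lies on the path: short cycle argument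
          have hwp2 : w ∈ p2.support := by
            simp only [SimpleGraph.Walk.support_cons, List.mem_cons] at hsup
            rcases hsup with rfl | rfl | h
            · exact absurd rfl hwu
            · exact absurd rfl hwa
            · exact h
          have hs : (p2.takeUntil w hwp2).IsPath := hp2.takeUntil hwp2
          have ht : (SimpleGraph.Walk.cons h2' (p2.takeUntil w hwp2)).IsPath :=
            hs.cons (fun h => hasup (p2.support_takeUntil_subset hwp2 h))
          have hne : s(w, a) ∉ (SimpleGraph.Walk.cons h2' (p2.takeUntil w hwp2)).edges := by
            simp only [SimpleGraph.Walk.edges_cons, List.mem_cons]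
            rintro (he | he)
            · rw [Sym2.eq_iff] at he
              rcases he with ⟨-, h6⟩ | ⟨h5, -⟩
              · exact hab h6
              · exact hwb h5
            · exact hasup (p2.support_takeUntil_subset hwp2
                (SimpleGraph.Walk.snd_mem_support_of_mem_edges _ he))
          have hc : (SimpleGraph.Walk.cons hw.symm
              (SimpleGraph.Walk.cons h2' (p2.takeUntil w hwp2))).IsCycle :=
            (SimpleGraph.Walk.cons_isCycle_iff _ _).mpr ⟨ht, hne⟩
          have h3 := hcyc _ _ hc
          simp only [SimpleGraph.Walk.length_cons] at h3
          have hl1 : (p2.takeUntil w hwp2).length = 1 := by omega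
          have hbw : G.Adj b w := SimpleGraph.Walk.adj_of_length_eq_one hl1
          exact no_four_cycle hcyc h1 hw hbw.symm hAdjub.symm
            (fun h => hwu h.symm) hab
        · -- w off the path: build another maximal path starting at w
          have hp' : (SimpleGraph.Walk.cons hw.symm
              (SimpleGraph.Walk.cons h2' p2)).IsPath := by
            refine SimpleGraph.Walk.IsPath.cons ?_ ?_
            · rw [SimpleGraph.Walk.cons_isPath_iff]; exact ⟨hp2, hasup⟩
            · intro h
              exact hsup (by simp [SimpleGraph.Walk.support_cons] at h ⊢; tauto)
          have hlen' : (SimpleGraph.Walk.cons hw.symm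
              (SimpleGraph.Walk.cons h2' p2)).length = n := by
            simp only [SimpleGraph.Walk.length_cons] at hlen ⊢
            omega
          obtain ⟨t, hat, hwt⟩ := exists_triangle htri hw
          have := nbr_class hcyc hmax _ hp' hlen' hwt
          simp only [SimpleGraph.Walk.getVert_cons_succ, SimpleGraph.Walk.getVert_zero] at this
          rcases this with rfl | rfl
          · exact absurd rfl hat.ne
          · exact no_four_cycle hcyc h1 hw hwt hAdjub.symm
              (fun h => hwu h.symm) hab
      -- conclude
      have hnu : G.neighborSet u = {a, b} := by
        ext w
        simp only [SimpleGraph.mem_neighborSet, Set.mem_insert_iff, Set.mem_singleton_iff]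
        constructor
        · exact hclassu w
        · rintro (rfl | rfl)
          · exact h1
          · exact hAdjub
      have hna : G.neighborSet a = {u, b} := by
        ext w
        simp only [SimpleGraph.mem_neighborSet, Set.mem_insert_iff, Set.mem_singleton_iff]
        constructor
        · exact hclassa w
        · rintro (rfl | rfl)
          · exact h1.symm
          · exact h2'
      refine ⟨b, a, u, h2'.symm, h1.symm, hAdjub.symm, ?_, ?_⟩
      · rw [hna]; exact Set.ncard_pair hub
      · rw [hnu]; exact Set.ncard_pair hab
end

section
/- Every simple series-parallel matroid of rank k on a ground set of size 2k−1, with k ≥ 2, is obtained from a simple series-parallel matroid of rank k−1 on a ground set of size 2k−3 by performing one parallel extension followed by one series extension. -/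
open Matroid Set Polynomial

variable {α β : Type*}

namespace Matroid

variable {α : Type*} {M : Matroid α} {B C C₁ C₂ D I J K X : Set α} {a b c e f g u v w x y : α}

lemma del_ground' (M : Matroid α) (D : Set α) : (M.del D).E = M.E \ D := rfl

lemma del_indep_iff' : (M.del D).Indep I ↔ M.Indep I ∧ I ⊆ M.E \ D := restrict_indep_iff

lemma ctr_ground' (M : Matroid α) (C : Set α) : (M.ctr C).E = M.E \ C := rfl

lemma dual_del' (M : Matroid α) (D : Set α) : (M.del D)✶ = M✶.ctr D := by
  rw [Matroid.ctr, Matroid.dual_dual]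

lemma dual_ctr' (M : Matroid α) (C : Set α) : (M.ctr C)✶ = M✶.del C := by
  rw [Matroid.ctr, Matroid.dual_dual]

lemma finite_del (hfin : M.Finite) (D : Set α) : (M.del D).Finite :=
  ⟨hfin.ground_finite.subset diff_subset⟩

lemma finite_dual (hfin : M.Finite) : (M✶).Finite := ⟨hfin.ground_finite⟩

lemma finite_ctr (hfin : M.Finite) (C : Set α) : (M.ctr C).Finite :=
  ⟨hfin.ground_finite.subset diff_subset⟩

lemma IsCct.subset_ground' (h : M.IsCct C) : C ⊆ M.E := h.1

lemma IsCct.not_indep (h : M.IsCct C) : ¬ M.Indep C := h.2.1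

lemma IsCct.diff_indep (h : M.IsCct C) (hx : x ∈ C) : M.Indep (C \ {x}) := h.2.2 x hx

lemma IsCct.nonempty (h : M.IsCct C) : C.Nonempty := by
  rcases C.eq_empty_or_nonempty with h0 | h0
  · exact absurd (h0 ▸ M.empty_indep) h.not_indep
  · exact h0

lemma IsCct.indep_singleton_of_mem (h : M.IsCct C) (ha : a ∈ C) (hb : b ∈ C) (hab : a ≠ b) :
    M.Indep {a} :=
  (h.diff_indep hb).subset (by simp [Set.singleton_subset_iff, ha, hab])

lemma IsCct.eq_of_dep_subset (h : M.IsCct C) (hD : D ⊆ C) (hdep : ¬ M.Indep D) : D = C := by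
  by_contra hne
  obtain ⟨x, hxC, hxD⟩ := Set.exists_of_ssubset (hD.ssubset_of_ne hne)
  exact hdep ((h.diff_indep hxC).subset
    (fun y hy => ⟨hD hy, fun h' => hxD (by rwa [Set.mem_singleton_iff.mp h'] at hy)⟩))

lemma exists_cct_of_dep (hfin : M.Finite) (hD : D ⊆ M.E) (hdep : ¬ M.Indep D) :
    ∃ C, C ⊆ D ∧ M.IsCct C := by
  have hDfin : D.Finite := hfin.ground_finite.subset hD
  obtain ⟨n, hn⟩ : ∃ n, D.ncard = n := ⟨_, rfl⟩
  induction n using Nat.strong_induction_on generalizing D with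
  | _ n ih =>
    by_cases hmin : ∀ x ∈ D, M.Indep (D \ {x})
    · exact ⟨D, Set.Subset.rfl, hD, hdep, hmin⟩
    · push_neg at hmin
      obtain ⟨x, hxD, hdep'⟩ := hmin
      have hlt : (D \ {x}).ncard < n := by
        rw [← hn]
        exact Set.ncard_lt_ncard ((Set.ssubset_iff_of_subset diff_subset).mpr
          ⟨x, hxD, fun h => h.2 rfl⟩) hDfin
      obtain ⟨C, hCsub, hC⟩ := ih _ hlt (diff_subset.trans hD) hdep'
        (hDfin.subset diff_subset) rfl
      exact ⟨C, hCsub.trans diff_subset, hC⟩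

lemma cct_elim (hfin : M.Finite) (h₁ : M.IsCct C₁) (h₂ : M.IsCct C₂) (hne : C₁ ≠ C₂)
    (he₁ : e ∈ C₁) (he₂ : e ∈ C₂) :
    ∃ C, C ⊆ (C₁ ∪ C₂) \ {e} ∧ M.IsCct C := by
  have hXE : C₁ ∪ C₂ ⊆ M.E := Set.union_subset h₁.subset_ground' h₂.subset_ground'
  have hXfin : (C₁ ∪ C₂).Finite := hfin.ground_finite.subset hXE
  apply exists_cct_of_dep hfin (diff_subset.trans hXE)
  intro hIndep
  obtain ⟨f, hf₂, hf₁⟩ : ∃ f, f ∈ C₂ ∧ f ∉ C₁ := by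
    by_contra h; push_neg at h
    exact hne (h₁.eq_of_dep_subset h h₂.not_indep).symm
  obtain ⟨Jb, hJ, hJC⟩ := (h₂.diff_indep hf₂).subset_isBasis_of_subset
    (diff_subset.trans Set.subset_union_right) hXE
  have hfJ : f ∉ Jb := by
    intro hfJ
    refine h₂.not_indep (hJ.indep.subset (fun y hy => ?_))
    by_cases hyf : y = f
    · exact hyf ▸ hfJ
    · exact hJC ⟨hy, hyf⟩
  obtain ⟨gg, hg₁, hgJ⟩ : ∃ g, g ∈ C₁ ∧ g ∉ Jb := by
    by_contra h; push_neg at h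
    exact h₁.not_indep (hJ.indep.subset h)
  have hgf : gg ≠ f := fun h => hf₁ (h ▸ hg₁)
  have hJfin : Jb.Finite := hXfin.subset hJ.subset
  have hIfin : ((C₁ ∪ C₂) \ {e}).Finite := hXfin.subset diff_subset
  have hJsub : Jb ⊆ (C₁ ∪ C₂) \ {f, gg} := fun z hz =>
    ⟨hJ.subset hz, by rintro (rfl | rfl) <;> [exact hfJ hz; exact hgJ hz]⟩
  have hfgsub : ({f, gg} : Set α) ⊆ C₁ ∪ C₂ :=
    Set.insert_subset (Set.subset_union_right hf₂) (Set.singleton_subset_iff.mpr (Set.subset_union_left hg₁))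
  have hcard : Jb.ncard < ((C₁ ∪ C₂) \ {e}).ncard := by
    have h1 : ((C₁ ∪ C₂) \ {e}).ncard = (C₁ ∪ C₂).ncard - 1 := by
      rw [Set.ncard_diff_singleton_of_mem (Set.subset_union_left he₁)]
    have h2 : ((C₁ ∪ C₂) \ {f, gg}).ncard = (C₁ ∪ C₂).ncard - 2 := by
      rw [Set.ncard_diff hfgsub, Set.ncard_pair hgf.symm]
    have h3 : 2 ≤ (C₁ ∪ C₂).ncard := by
      have := Set.ncard_le_ncard hfgsub hXfin
      rwa [Set.ncard_pair hgf.symm] at this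
    have h4 : Jb.ncard ≤ ((C₁ ∪ C₂) \ {f, gg}).ncard :=
      Set.ncard_le_ncard hJsub (hXfin.subset diff_subset)
    omega
  have hcard' : Jb.encard < ((C₁ ∪ C₂) \ {e}).encard := by
    rw [← hJfin.cast_ncard_eq, ← hIfin.cast_ncard_eq]
    exact_mod_cast hcard
  obtain ⟨z, hz, hzind⟩ := hJ.indep.augment hIndep hcard'
  exact (hJ.insert_dep ⟨hz.1.1, hz.2⟩).not_indep hzind

lemma cct_cocct_inter (hfin : M.Finite) (hC : M.IsCct C) (hK : M.IsCocct K)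
    (h : C ∩ K = {e}) : False := by
  have hK' : (M✶).IsCct K := hK
  have hCE : C ⊆ M.E := hC.subset_ground'
  have hKE : K ⊆ M.E := hK'.subset_ground'
  have heC : e ∈ C := by
    have : e ∈ C ∩ K := by rw [h]; exact rfl
    exact this.1
  have heK : e ∈ K := by
    have : e ∈ C ∩ K := by rw [h]; exact rfl
    exact this.2
  have hKe : M✶.Indep (K \ {e}) := hK'.diff_indep heK
  rw [dual_indep_iff_exists'] at hKe
  obtain ⟨-, Bb, hB, hdisj⟩ := hKe
  set Xs := M.E \ (K \ {e}) with hXdef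
  have hBX : Bb ⊆ Xs := fun z hz => ⟨hB.subset_ground hz, Set.disjoint_right.mp hdisj hz⟩
  have hXE : Xs ⊆ M.E := diff_subset
  have hBbasis : M.IsBasis Bb Xs := hB.isBasis_of_subset hXE hBX
  have hCX : C ⊆ Xs := by
    intro z hzC
    refine ⟨hCE hzC, fun hzK => hzK.2 ?_⟩
    have : z ∈ C ∩ K := ⟨hzC, hzK.1⟩
    rw [h] at this
    exact this
  have hCe : M.Indep (C \ {e}) := hC.diff_indep heC
  obtain ⟨Js, hJ, hJsup⟩ := hCe.subset_isBasis_of_subset (diff_subset.trans hCX) hXE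
  have hcard : Js.encard = Bb.encard := hJ.encard_eq_encard hBbasis
  obtain ⟨B₅, hB₅, hJB₅⟩ := hJ.indep.exists_isBase_superset
  have hcard2 : B₅.encard = Bb.encard := hB₅.encard_eq_encard_of_isBase hB
  have hB₅fin : B₅.Finite := hfin.ground_finite.subset hB₅.subset_ground
  have hJB : Js = B₅ := Set.Finite.eq_of_subset_of_encard_le' hB₅fin hJB₅ (by rw [hcard2, hcard])
  by_cases heJ : e ∈ Js
  · refine hC.not_indep (hJ.indep.subset (fun z hz => ?_))
    by_cases hze : z = e
    · exact hze ▸ heJ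
    · exact hJsup ⟨hz, hze⟩
  · have : M✶.Indep K := by
      rw [dual_indep_iff_exists']
      refine ⟨hKE, Js, hJB ▸ hB₅, Set.disjoint_right.mpr (fun z hzJ hzK => ?_)⟩
      have hzX : z ∈ Xs := hJ.subset hzJ
      have hze : z = e := by
        by_contra hne
        exact hzX.2 ⟨hzK, hne⟩
      exact heJ (hze ▸ hzJ)
    exact hK'.not_indep this

lemma IsCct.dual_indep_of_mem (hfin : M.Finite) (hC : M.IsCct C) (ha : a ∈ C) :
    M✶.Indep {a} := by
  by_contra hdep
  have hcc : (M✶).IsCct {a} :=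
    ⟨Set.singleton_subset_iff.mpr (hC.subset_ground' ha), hdep, by
      intro z hz
      rw [Set.mem_singleton_iff] at hz
      subst hz
      rw [Set.diff_self]
      exact M✶.empty_indep⟩
  exact cct_cocct_inter hfin hC hcc (Set.inter_eq_right.mpr (Set.singleton_subset_iff.mpr ha))

end Matroid

namespace Matroid

variable {α : Type*} {M : Matroid α} {B C C₁ C₂ D I J K X : Set α} {a b c e f g u v w x y : α}

lemma indep_singleton_of_mem_cocct (hfin : M.Finite) (hK : M.IsCocct K) (ha : a ∈ K) :
    M.Indep {a} := by
  have hK' : (M✶).IsCct K := hK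
  have := hK'.dual_indep_of_mem (finite_dual hfin) ha
  rwa [dual_dual] at this

lemma ctr_indep_iff (hx : M.Indep {x}) :
    (M.ctr {x}).Indep I ↔ x ∉ I ∧ M.Indep (insert x I) := by
  have hxE : x ∈ M.E := hx.subset_ground rfl
  have hbasis : ∀ B, M✶.IsBasis B (M.E \ {x}) → M✶.IsBase B := by
    intro B hB
    obtain ⟨B', hB', hBB'⟩ := hB.indep.exists_isBase_superset
    have hB'B : B' ⊆ insert x B := by
      intro z hz
      by_contra hzB
      rw [Set.mem_insert_iff] at hzB
      push_neg at hzB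
      have hzE : z ∈ M.E := hB'.subset_ground hz
      exact hzB.2 (hB.mem_of_insert_indep ⟨hzE, hzB.1⟩
        (hB'.indep.subset (Set.insert_subset hz hBB')))
    by_cases hxB' : x ∈ B'
    · exfalso
      have hxd : M✶✶.Indep {x} := by rwa [dual_dual]
      rw [dual_indep_iff_exists'] at hxd
      obtain ⟨-, Db, hD, hdisj⟩ := hxd
      have hxD : x ∉ Db := fun h => Set.disjoint_left.mp hdisj rfl h
      obtain ⟨ff, hf, hfB⟩ := hB'.exchange hD ⟨hxB', hxD⟩
      have hfx : ff ≠ x := fun h => hxD (h ▸ hf.1)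
      have hfE : ff ∈ M✶.E := hD.subset_ground hf.1
      have hBsub : B ⊆ B' \ {x} := fun z hz => ⟨hBB' hz, (hB.subset hz).2⟩
      have : ff ∈ B := hB.mem_of_insert_indep ⟨hfE, hfx⟩
        (hfB.indep.subset (Set.insert_subset_insert hBsub))
      exact hf.2 (hBB' this)
    · have hBeq : B' = B := subset_antisymm
        (fun z hz => (Set.mem_insert_iff.mp (hB'B hz)).resolve_left
          (fun h => hxB' (h ▸ hz))) hBB'
      exact hBeq ▸ hB'
  have hgr : (M.ctr {x}).Indep I ↔
      I ⊆ M.E \ {x} ∧ ∃ B, M✶.IsBase B ∧ B ⊆ M.E \ {x} ∧ Disjoint I B := by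
    rw [Matroid.ctr, dual_indep_iff_exists']
    constructor
    · rintro ⟨hIsub, B, hB, hdisj⟩
      rw [Matroid.del, isBase_restrict_iff'] at hB
      have hB2 : M✶.IsBasis B (M.E \ {x}) := hB.isBasis diff_subset
      exact ⟨hIsub, B, hbasis B hB2, hB2.subset, hdisj⟩
    · rintro ⟨hIsub, B, hB, hBsub, hdisj⟩
      refine ⟨hIsub, B, ?_, hdisj⟩
      rw [Matroid.del, isBase_restrict_iff']
      exact (hB.isBasis_of_subset diff_subset hBsub).isBasis'
  rw [hgr]
  constructor
  · rintro ⟨hIsub, B, hB, hBsub, hdisj⟩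
    refine ⟨fun h => (hIsub h).2 rfl, ?_⟩
    have : M✶✶.Indep (insert x I) := by
      rw [dual_indep_iff_exists']
      refine ⟨Set.insert_subset hxE (hIsub.trans diff_subset), B, hB, ?_⟩
      refine Set.disjoint_left.mpr ?_
      rintro z (rfl | hz) hzB
      · exact (hBsub hzB).2 rfl
      · exact Set.disjoint_left.mp hdisj hz hzB
    rwa [dual_dual] at this
  · rintro ⟨hxI, hind⟩
    have hIE : I ⊆ M.E := (Set.subset_insert _ _).trans hind.subset_ground
    have hdd : M✶✶.Indep (insert x I) := by rwa [dual_dual]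
    rw [dual_indep_iff_exists'] at hdd
    obtain ⟨-, B, hB, hdisj⟩ := hdd
    have hxB : x ∉ B := fun h => Set.disjoint_left.mp hdisj (Set.mem_insert _ _) h
    exact ⟨Set.subset_diff_singleton hIE hxI, B, hB,
      Set.subset_diff_singleton hB.subset_ground hxB,
      hdisj.mono_left (Set.subset_insert _ _)⟩

lemma pair_cct_of_dep (hl : M.Loopless') (ha : a ∈ M.E) (hb : b ∈ M.E) (hab : a ≠ b)
    (hdep : ¬ M.Indep {a, b}) : M.IsCct {a, b} := by
  refine ⟨Set.insert_subset ha (Set.singleton_subset_iff.mpr hb), hdep, ?_⟩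
  intro z hz
  rcases hz with rfl | hz
  · rw [Set.pair_diff_left hab]
    exact hl b hb
  · rw [Set.mem_singleton_iff] at hz
    subst hz
    rw [Set.pair_diff_right hab]
    exact hl a ha

lemma cct_subset_pair (hC : M.IsCct C) (hsub : C ⊆ {u, v}) (hu : M.Indep {u})
    (hv : M.Indep {v}) : C = {u, v} := by
  have hmem : ∀ z (_ : M.Indep {z}) (_ : C ⊆ insert z {u,v}), z ∈ C ∨ C ⊆ {u,v} \ {z} ∨ True := by
    intro _ _ _; right; right; trivial
  have huC : u ∈ C := by
    by_contra h
    have hsub' : C ⊆ {v} := by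
      intro z hz
      rcases hsub hz with rfl | hzv
      · exact absurd hz h
      · exact hzv
    rcases Set.subset_singleton_iff_eq.mp hsub' with h0 | h0
    · exact hC.not_indep (h0 ▸ M.empty_indep)
    · exact hC.not_indep (h0 ▸ hv)
  have hvC : v ∈ C := by
    by_contra h
    have hsub' : C ⊆ {u} := by
      intro z hz
      rcases hsub hz with rfl | hzv
      · exact rfl
      · rw [Set.mem_singleton_iff] at hzv; exact absurd (hzv ▸ hz) h
    rcases Set.subset_singleton_iff_eq.mp hsub' with h0 | h0
    · exact hC.not_indep (h0 ▸ M.empty_indep)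
    · exact hC.not_indep (h0 ▸ hu)
  exact subset_antisymm hsub (Set.insert_subset huC (Set.singleton_subset_iff.mpr hvC))

lemma indep_pair_of_not_cct (hfin : M.Finite) (hu : M.Indep {u}) (hv : M.Indep {v})
    (h : ¬ M.IsCct {u, v}) : M.Indep {u, v} := by
  by_contra hdep
  obtain ⟨C, hCsub, hC⟩ := exists_cct_of_dep hfin
    (Set.insert_subset (hu.subset_ground rfl) (Set.singleton_subset_iff.mpr (hv.subset_ground rfl))) hdep
  exact h (cct_subset_pair hC hCsub hu hv ▸ hC)

lemma cct_del_iff : (M.del D).IsCct C ↔ M.IsCct C ∧ Disjoint C D := by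
  constructor
  · rintro ⟨hsub, hdep, hmin⟩
    have hsub' : C ⊆ M.E \ D := hsub
    refine ⟨⟨hsub'.trans diff_subset, fun h => hdep (del_indep_iff'.mpr ⟨h, hsub'⟩),
      fun z hz => (del_indep_iff'.mp (hmin z hz)).1⟩,
      Set.disjoint_left.mpr fun z hz => (hsub' hz).2⟩
  · rintro ⟨hC, hdisj⟩
    have hsub : C ⊆ M.E \ D := Set.subset_diff.mpr ⟨hC.subset_ground', hdisj⟩
    exact ⟨hsub, fun h => hC.not_indep (del_indep_iff'.mp h).1,
      fun z hz => del_indep_iff'.mpr ⟨hC.diff_indep hz, diff_subset.trans hsub⟩⟩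

lemma cct_ctr_lift (hfin : M.Finite) (hx : M.Indep {x}) (hC : (M.ctr {x}).IsCct C) :
    (M.IsCct C ∨ M.IsCct (insert x C)) ∧ x ∉ C := by
  have hsub : C ⊆ M.E \ {x} := hC.subset_ground'
  have hxC : x ∉ C := fun h => (hsub h).2 rfl
  have hdep : ¬ M.Indep (insert x C) := by
    intro h
    exact hC.not_indep ((ctr_indep_iff hx).mpr ⟨hxC, h⟩)
  refine ⟨?_, hxC⟩
  by_cases hCi : M.Indep C
  · obtain ⟨T, hTsub, hT⟩ := exists_cct_of_dep hfin
      (Set.insert_subset (hx.subset_ground rfl) (hsub.trans diff_subset)) hdep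
    have hxT : x ∈ T := by
      by_contra h
      exact hT.not_indep (hCi.subset (fun z hz =>
        (Set.mem_insert_iff.mp (hTsub hz)).resolve_left (fun h' => h (h' ▸ hz))))
    have hTx_dep : ¬ (M.ctr {x}).Indep (T \ {x}) := by
      rw [ctr_indep_iff hx]
      rintro ⟨-, habs⟩
      rw [Set.insert_diff_singleton, Set.insert_eq_self.mpr hxT] at habs
      exact hT.not_indep habs
    have hTC : T \ {x} ⊆ C := fun z hz =>
      (Set.mem_insert_iff.mp (hTsub hz.1)).resolve_left (fun h' => hz.2 h')
    have heq : T \ {x} = C := hC.eq_of_dep_subset hTC hTx_dep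
    right
    rw [← heq, Set.insert_diff_singleton, Set.insert_eq_self.mpr hxT]
    exact hT
  · left
    refine ⟨hsub.trans diff_subset, hCi, fun z hz => ?_⟩
    have h2 := hC.diff_indep hz
    rw [ctr_indep_iff hx] at h2
    exact h2.2.subset (Set.subset_insert _ _)

lemma pair_cct_ctr_of (hC : M.IsCct {u, v}) (huv : u ≠ v) (ha : M.Indep {a})
    (haC : a ∉ ({u, v} : Set α)) (h1 : M.Indep {a, u}) (h2 : M.Indep {a, v}) :
    (M.ctr {a}).IsCct {u, v} := by
  have hau : a ≠ u := fun h => haC (h ▸ Set.mem_insert _ _)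
  have hav : a ≠ v := fun h => haC (h ▸ Set.mem_insert_of_mem _ rfl)
  refine ⟨?_, ?_, ?_⟩
  · show ({u, v} : Set α) ⊆ M.E \ {a}
    rw [Set.subset_diff]
    refine ⟨hC.subset_ground', Set.disjoint_left.mpr ?_⟩
    rintro z (rfl | hz)
    · exact fun h => hau (Set.mem_singleton_iff.mp h).symm
    · rw [Set.mem_singleton_iff] at hz; subst hz
      exact fun h => hav (Set.mem_singleton_iff.mp h).symm
  · rw [ctr_indep_iff ha]
    rintro ⟨-, h⟩
    exact hC.not_indep (h.subset (Set.subset_insert _ _))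
  · intro z hz
    rw [ctr_indep_iff ha]
    rcases hz with rfl | hz
    · rw [Set.pair_diff_left huv]
      exact ⟨fun h => hav (Set.mem_singleton_iff.mp h), h2⟩
    · rw [Set.mem_singleton_iff] at hz; subst hz
      rw [Set.pair_diff_right huv]
      exact ⟨fun h => hau (Set.mem_singleton_iff.mp h), h1⟩

lemma cct_ctr_of_mem (hC : M.IsCct C) (hx : x ∈ C) (hy : y ∈ C) (hxy : x ≠ y) :
    (M.ctr {x}).IsCct (C \ {x}) := by
  have hxind : M.Indep {x} := hC.indep_singleton_of_mem hx hy hxy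
  refine ⟨?_, ?_, ?_⟩
  · exact Set.diff_subset_diff_left hC.subset_ground'
  · rw [ctr_indep_iff hxind]
    rintro ⟨-, h⟩
    rw [Set.insert_diff_singleton, Set.insert_eq_self.mpr hx] at h
    exact hC.not_indep h
  · intro z hz
    rw [ctr_indep_iff hxind]
    refine ⟨fun h => h.1.2 rfl, ?_⟩
    have hzx : z ≠ x := hz.2
    have hxmem : x ∈ C \ {z} := ⟨hx, fun h => hzx (Set.mem_singleton_iff.mp h).symm⟩
    have heq : insert x ((C \ {x}) \ {z}) = C \ {z} := by
      rw [Set.diff_diff_comm, Set.insert_diff_singleton, Set.insert_eq_self.mpr hxmem]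
    rw [heq]
    exact hC.diff_indep hz.1

lemma del_del' (M : Matroid α) (D D' : Set α) : (M.del D).del D' = M ↾ ((M.E \ D) \ D') := by
  show (M ↾ (M.E \ D)) ↾ ((M.E \ D) \ D') = M ↾ ((M.E \ D) \ D')
  rw [restrict_restrict_eq M diff_subset]

lemma del_comm (M : Matroid α) (D D' : Set α) : (M.del D).del D' = (M.del D').del D := by
  rw [del_del', del_del', Set.diff_diff_comm]

lemma ctr_del_comm (hx : M.Indep {x}) (hax : a ≠ x) (ha : a ∈ M.E) :
    (M.del {a}).ctr {x} = (M.ctr {x}).del {a} := by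
  have hxE : x ∈ M.E := hx.subset_ground rfl
  have hxdel : (M.del {a}).Indep {x} := del_indep_iff'.mpr
    ⟨hx, Set.singleton_subset_iff.mpr ⟨hxE, fun h => hax (Set.mem_singleton_iff.mp h).symm⟩⟩
  apply ext_indep
  · show (M.E \ {a}) \ {x} = (M.E \ {x}) \ {a}
    rw [Set.diff_diff_comm]
  · intro I hI
    have hI' : I ⊆ (M.E \ {a}) \ {x} := hI
    rw [ctr_indep_iff hxdel, del_indep_iff', del_indep_iff', ctr_indep_iff hx]
    constructor
    · rintro ⟨hxI, hind, hsub⟩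
      refine ⟨⟨hxI, hind⟩, ?_⟩
      intro z hz
      exact ⟨⟨(hI' hz).1.1, (hI' hz).2⟩, (hI' hz).1.2⟩
    · rintro ⟨⟨hxI, hind⟩, hsub⟩
      refine ⟨hxI, hind, ?_⟩
      intro z hz
      rcases Set.mem_insert_iff.mp hz with rfl | hzI
      · exact ⟨hxE, fun h => hax (Set.mem_singleton_iff.mp h).symm⟩
      · exact ⟨(hI' hzI).1.1, (hI' hzI).1.2⟩

end Matroid

namespace Matroid

variable {α : Type*} {M : Matroid α} {B C C₁ C₂ D I J K X : Set α} {a b c e f g u v w x y : α}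

lemma rank_bddAbove (hfin : M.Finite) :
    BddAbove {n | ∃ I, M.Indep I ∧ I ⊆ M.E ∧ I.ncard = n} := by
  refine ⟨M.E.ncard, ?_⟩
  rintro n ⟨I, hI, hIE, rfl⟩
  exact Set.ncard_le_ncard hIE hfin.ground_finite

lemma le_rank (hfin : M.Finite) (hI : M.Indep I) : I.ncard ≤ M.rank :=
  le_csSup (rank_bddAbove hfin) ⟨I, hI, hI.subset_ground, rfl⟩

lemma rank_le (hfin : M.Finite) {m : ℕ} (h : ∀ I, M.Indep I → I.ncard ≤ m) : M.rank ≤ m := by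
  have hne : Set.Nonempty {n | ∃ I, M.Indep I ∧ I ⊆ M.E ∧ I.ncard = n} :=
    ⟨0, ∅, M.empty_indep, Set.empty_subset _, by simp⟩
  apply csSup_le hne
  rintro n ⟨I, hI, -, rfl⟩
  exact h I hI

lemma exists_rank_indep (hfin : M.Finite) : ∃ I, M.Indep I ∧ I.ncard = M.rank := by
  have hne : Set.Nonempty {n | ∃ I, M.Indep I ∧ I ⊆ M.E ∧ I.ncard = n} :=
    ⟨0, ∅, M.empty_indep, Set.empty_subset _, by simp⟩
  have := Nat.sSup_mem hne (rank_bddAbove hfin)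
  obtain ⟨I, hI, -, hcard⟩ := this
  exact ⟨I, hI, hcard⟩

lemma indep_finite (hfin : M.Finite) (hI : M.Indep I) : I.Finite :=
  hfin.ground_finite.subset hI.subset_ground

lemma swap_indep (hfin : M.Finite) (hC : M.IsCct {x, a}) (hxa : x ≠ a) (hI : M.Indep I)
    (hxI : x ∈ I) (haI : a ∉ I) : M.Indep (insert a (I \ {x})) := by
  by_contra hdep
  have haE : a ∈ M.E := hC.subset_ground' (Set.mem_insert_of_mem _ rfl)
  have hsubE : insert a (I \ {x}) ⊆ M.E :=
    Set.insert_subset haE ((diff_subset.trans hI.subset_ground))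
  obtain ⟨C', hC'sub, hC'⟩ := exists_cct_of_dep hfin hsubE hdep
  have haC' : a ∈ C' := by
    by_contra h
    exact hC'.not_indep (hI.subset (fun z hz =>
      ((Set.mem_insert_iff.mp (hC'sub hz)).resolve_left (fun h' => h (h' ▸ hz))).1))
  have hxC' : x ∉ C' := by
    intro h
    rcases Set.mem_insert_iff.mp (hC'sub h) with h' | h'
    · exact hxa h'
    · exact h'.2 rfl
  have hne : C' ≠ ({x, a} : Set α) := fun h => hxC' (h ▸ Set.mem_insert _ _)
  obtain ⟨C₀, hC₀sub, hC₀⟩ := cct_elim hfin hC' hC hne haC' (Set.mem_insert_of_mem _ rfl)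
  refine hC₀.not_indep (hI.subset ?_)
  intro z hz
  obtain ⟨hz1, hz2⟩ := hC₀sub hz
  rcases hz1 with hz1 | hz1
  · exact ((Set.mem_insert_iff.mp (hC'sub hz1)).resolve_left
      (fun h' => hz2 (Set.mem_singleton_iff.mpr h'))).1
  · rcases Set.mem_insert_iff.mp hz1 with rfl | h'
    · exact hxI
    · exact absurd h' hz2

lemma rank_ctr_add_one (hfin : M.Finite) (hx : M.Indep {x}) :
    (M.ctr {x}).rank + 1 = M.rank := by
  have hxE : x ∈ M.E := hx.subset_ground rfl
  have hfin' : (M.ctr {x}).Finite := finite_ctr hfin _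
  apply Nat.le_antisymm
  · obtain ⟨I₀, hI₀, hcard⟩ := exists_rank_indep hfin'
    rw [ctr_indep_iff hx] at hI₀
    have : (insert x I₀).ncard ≤ M.rank := le_rank hfin hI₀.2
    rw [Set.ncard_insert_of_notMem hI₀.1
      (hfin.ground_finite.subset ((Set.subset_insert _ _).trans hI₀.2.subset_ground))] at this
    omega
  · obtain ⟨J₀, hJ₀, hcard⟩ := exists_rank_indep hfin
    have hJfin : J₀.Finite := indep_finite hfin hJ₀
    by_cases hxJ : x ∈ J₀
    · have hI : (M.ctr {x}).Indep (J₀ \ {x}) := by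
        rw [ctr_indep_iff hx]
        exact ⟨fun h => h.2 rfl, by
          rwa [Set.insert_diff_singleton, Set.insert_eq_self.mpr hxJ]⟩
      have h1 := le_rank hfin' hI
      have h2 : (J₀ \ {x}).ncard + 1 = J₀.ncard := Set.ncard_diff_singleton_add_one hxJ hJfin
      omega
    · have hdep : ¬ M.Indep (insert x J₀) := by
        intro h
        have := le_rank hfin h
        rw [Set.ncard_insert_of_notMem hxJ hJfin] at this
        omega
      obtain ⟨T, hTsub, hT⟩ := exists_cct_of_dep hfin
        (Set.insert_subset hxE hJ₀.subset_ground) hdep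
      have hxT : x ∈ T := by
        by_contra h
        exact hT.not_indep (hJ₀.subset (fun z hz =>
          (Set.mem_insert_iff.mp (hTsub hz)).resolve_left (fun h' => h (h' ▸ hz))))
      obtain ⟨yy, hyT, hyx⟩ : ∃ y, y ∈ T ∧ y ≠ x := by
        by_contra h
        push_neg at h
        exact hT.not_indep ((Set.eq_singleton_iff_unique_mem.mpr ⟨hxT, h⟩) ▸ hx)
      have hyJ : yy ∈ J₀ := (Set.mem_insert_iff.mp (hTsub hyT)).resolve_left hyx
      have hins : M.Indep (insert x (J₀ \ {yy})) := by
        by_contra hdep'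
        obtain ⟨T', hT'sub, hT'⟩ := exists_cct_of_dep hfin
          (Set.insert_subset hxE (diff_subset.trans hJ₀.subset_ground)) hdep'
        have hxT' : x ∈ T' := by
          by_contra h
          exact hT'.not_indep (hJ₀.subset (fun z hz =>
            ((Set.mem_insert_iff.mp (hT'sub hz)).resolve_left (fun h' => h (h' ▸ hz))).1))
        have hyT' : yy ∉ T' := by
          intro h
          rcases Set.mem_insert_iff.mp (hT'sub h) with h' | h'
          · exact hyx h'
          · exact h'.2 rfl
        have hneTT : T' ≠ T := fun h => hyT' (h ▸ hyT)
        obtain ⟨C₀, hC₀sub, hC₀⟩ := cct_elim hfin hT' hT hneTT hxT' hxT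
        refine hC₀.not_indep (hJ₀.subset ?_)
        intro z hz
        obtain ⟨hz1, hz2⟩ := hC₀sub hz
        have hzx : z ≠ x := fun h => hz2 (Set.mem_singleton_iff.mpr h)
        rcases hz1 with hz1 | hz1
        · exact ((Set.mem_insert_iff.mp (hT'sub hz1)).resolve_left hzx).1
        · exact (Set.mem_insert_iff.mp (hTsub hz1)).resolve_left hzx
      have hI : (M.ctr {x}).Indep (J₀ \ {yy}) := by
        rw [ctr_indep_iff hx]
        exact ⟨fun h => hxJ h.1, hins⟩
      have h1 := le_rank hfin' hI
      have h2 : (J₀ \ {yy}).ncard + 1 = J₀.ncard := Set.ncard_diff_singleton_add_one hyJ hJfin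
      omega

lemma rank_del_eq (hfin : M.Finite) (hC : M.IsCct {x, c}) (hxc : x ≠ c) :
    (M.del {x}).rank = M.rank := by
  have hfin' : (M.del {x}).Finite := finite_del hfin _
  apply Nat.le_antisymm
  · exact rank_le hfin' (fun I hI => le_rank hfin (del_indep_iff'.mp hI).1)
  · obtain ⟨J₀, hJ₀, hcard⟩ := exists_rank_indep hfin
    have hJfin : J₀.Finite := indep_finite hfin hJ₀
    by_cases hxJ : x ∈ J₀
    · have hcJ : c ∉ J₀ := by
        intro h
        exact hC.not_indep (hJ₀.subset (Set.insert_subset hxJ (Set.singleton_subset_iff.mpr h)))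
      have hI : M.Indep (insert c (J₀ \ {x})) := swap_indep hfin hC hxc hJ₀ hxJ hcJ
      have hIsub : insert c (J₀ \ {x}) ⊆ M.E \ {x} := by
        refine Set.insert_subset ⟨hC.subset_ground' (Set.mem_insert_of_mem _ rfl),
          fun h => hxc (Set.mem_singleton_iff.mp h).symm⟩ ?_
        intro z hz
        exact ⟨hJ₀.subset_ground hz.1, hz.2⟩
      have hIdel : (M.del {x}).Indep (insert c (J₀ \ {x})) := del_indep_iff'.mpr ⟨hI, hIsub⟩
      have h1 := le_rank hfin' hIdel
      have h2 : (insert c (J₀ \ {x})).ncard = (J₀ \ {x}).ncard + 1 :=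
        Set.ncard_insert_of_notMem (fun h => hcJ h.1) (hJfin.subset diff_subset)
      have h3 : (J₀ \ {x}).ncard + 1 = J₀.ncard := Set.ncard_diff_singleton_add_one hxJ hJfin
      omega
    · have hIdel : (M.del {x}).Indep J₀ := del_indep_iff'.mpr
        ⟨hJ₀, Set.subset_diff_singleton hJ₀.subset_ground hxJ⟩
      have := le_rank hfin' hIdel
      omega

lemma one_le_rank (hfin : M.Finite) (hl : M.Indep {a}) : 1 ≤ M.rank := by
  have := le_rank hfin hl
  rwa [Set.ncard_singleton] at this

lemma two_le_rank (hfin : M.Finite) (hs : M.Simple') (ha : a ∈ M.E) (hb : b ∈ M.E)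
    (hab : a ≠ b) : 2 ≤ M.rank := by
  have := le_rank hfin (hs.2 a ha b hb hab)
  rwa [Set.ncard_pair hab] at this

lemma sp_finite (hsp : M.IsSeriesParallel) : M.Finite := by
  induction hsp with
  | loop e => exact ⟨Set.finite_singleton e⟩
  | coloop e => exact ⟨Set.finite_singleton e⟩
  | parallel h hext ih =>
    obtain ⟨e, C, heE, hC, h2, heC, hdel⟩ := hext
    refine ⟨((ih.ground_finite).union (Set.finite_singleton e)).subset ?_⟩
    intro z hz
    by_cases hze : z = e
    · exact Or.inr (hze ▸ rfl)
    · left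
      rw [← hdel]
      exact ⟨hz, fun h => hze (Set.mem_singleton_iff.mp h)⟩
  | series h hext ih =>
    obtain ⟨e, C, heE, hC, h2, heC, hctr⟩ := hext
    refine ⟨((ih.ground_finite).union (Set.finite_singleton e)).subset ?_⟩
    intro z hz
    by_cases hze : z = e
    · exact Or.inr (hze ▸ rfl)
    · left
      rw [← hctr]
      exact ⟨hz, fun h => hze (Set.mem_singleton_iff.mp h)⟩

lemma sp_nonempty (hsp : M.IsSeriesParallel) : M.E.Nonempty := by
  induction hsp with
  | loop e => exact ⟨e, rfl⟩
  | coloop e => exact ⟨e, rfl⟩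
  | parallel h hext ih => obtain ⟨e, C, heE, -⟩ := hext; exact ⟨e, heE⟩
  | series h hext ih => obtain ⟨e, C, heE, -⟩ := hext; exact ⟨e, heE⟩

lemma loopless_del (hl : M.Loopless') (D : Set α) : (M.del D).Loopless' := by
  intro e he
  have he' : e ∈ M.E \ D := he
  exact del_indep_iff'.mpr ⟨hl e he'.1, Set.singleton_subset_iff.mpr he'⟩

lemma loopless_ctr_of_simple (hs : M.Simple') (hx : x ∈ M.E) : (M.ctr {x}).Loopless' := by
  intro e he
  have he' : e ∈ M.E \ {x} := he
  have hxind : M.Indep {x} := hs.1 x hx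
  have hxe : x ≠ e := fun h => he'.2 (Set.mem_singleton_iff.mpr h.symm)
  rw [ctr_indep_iff hxind]
  exact ⟨fun h => hxe (Set.mem_singleton_iff.mp h), hs.2 x hx e he'.1 hxe⟩

end Matroid

namespace Matroid

variable {α : Type*} {M N : Matroid α} {B C C₁ C₂ D I J K X : Set α} {a b c e f g u v w x y : α}
  {φ : α → α}

/-- An isomorphism between two matroids on the same type, realized by a function. -/
def IsoFun (M N : Matroid α) (φ : α → α) : Prop :=
  Set.BijOn φ M.E N.E ∧ ∀ I ⊆ M.E, (M.Indep I ↔ N.Indep (φ '' I))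

lemma IsoFun.cct (h : M.IsoFun N φ) (hC : M.IsCct C) : N.IsCct (φ '' C) := by
  have hCE : C ⊆ M.E := hC.subset_ground'
  refine ⟨(Set.image_mono hCE).trans h.1.image_eq.subset, fun hind => hC.not_indep ((h.2 C hCE).mpr hind), ?_⟩
  rintro z ⟨w, hwC, rfl⟩
  have himg : φ '' (C \ {w}) = φ '' C \ {φ w} := by
    rw [(h.1.injOn.mono hCE).image_diff_subset (Set.singleton_subset_iff.mpr hwC),
      Set.image_singleton]
  rw [← himg]
  exact ((h.2 (C \ {w}) (diff_subset.trans hCE)).mp (hC.diff_indep hwC))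

lemma IsoFun.base_iff (h : M.IsoFun N φ) (hB : B ⊆ M.E) : M.IsBase B ↔ N.IsBase (φ '' B) := by
  constructor
  · intro hM
    refine ((h.2 B hB).mp hM.indep).isBase_of_maximal (fun J hJ hBJ => ?_)
    obtain ⟨I₂, hI₂E, rfl⟩ := Set.subset_image_iff.mp (hJ.subset_ground.trans h.1.image_eq.symm.subset)
    have hBI₂ : B ⊆ I₂ := by
      intro bb hbb
      obtain ⟨i, hi, hieq⟩ := hBJ (Set.mem_image_of_mem φ hbb)
      rwa [← h.1.injOn (hI₂E hi) (hB hbb) hieq]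
    rw [hM.eq_of_subset_indep ((h.2 I₂ hI₂E).mpr hJ) hBI₂]
  · intro hN
    refine ((h.2 B hB).mpr hN.indep).isBase_of_maximal (fun J hJ hBJ => ?_)
    have hJE : J ⊆ M.E := hJ.subset_ground
    have himg : φ '' B = φ '' J :=
      hN.eq_of_subset_indep ((h.2 J hJE).mp hJ) (Set.image_mono hBJ)
    refine subset_antisymm hBJ (fun j hj => ?_)
    obtain ⟨bb, hbb, hbeq⟩ := himg.symm.subset (Set.mem_image_of_mem φ hj)
    rwa [← h.1.injOn (hB hbb) (hJE hj) hbeq]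

lemma IsoFun.dual (h : M.IsoFun N φ) : M✶.IsoFun N✶ φ := by
  refine ⟨h.1, fun I hI => ?_⟩
  have hIE : I ⊆ M.E := hI
  rw [dual_indep_iff_exists', dual_indep_iff_exists']
  constructor
  · rintro ⟨-, B, hB, hdisj⟩
    refine ⟨(Set.image_mono hIE).trans h.1.image_eq.subset,
      φ '' B, (h.base_iff hB.subset_ground).mp hB, Set.disjoint_left.mpr ?_⟩
    rintro z ⟨i, hi, rfl⟩ ⟨bb, hbb, hbeq⟩
    rw [h.1.injOn (hB.subset_ground hbb) (hIE hi) hbeq] at hbb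
    exact Set.disjoint_left.mp hdisj hi hbb
  · rintro ⟨-, B', hB', hdisj⟩
    obtain ⟨B, hBE, rfl⟩ := Set.subset_image_iff.mp (hB'.subset_ground.trans h.1.image_eq.symm.subset)
    refine ⟨hIE, B, (h.base_iff hBE).mpr hB', Set.disjoint_left.mpr ?_⟩
    intro i hiI hiB
    exact Set.disjoint_left.mp hdisj (Set.mem_image_of_mem φ hiI) (Set.mem_image_of_mem φ hiB)

lemma IsoFun.del (h : M.IsoFun N φ) (he : e ∈ M.E) :
    (M.del {e}).IsoFun (N.del {φ e}) φ := by
  constructor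
  · show Set.BijOn φ (M.E \ {e}) (N.E \ {φ e})
    refine ⟨?_, h.1.injOn.mono diff_subset, ?_⟩
    · intro z hz
      refine ⟨h.1.mapsTo hz.1, fun hzz => hz.2 ?_⟩
      rw [Set.mem_singleton_iff] at hzz ⊢
      exact h.1.injOn hz.1 he hzz
    · intro z hz
      obtain ⟨w, hw, rfl⟩ := h.1.surjOn hz.1
      refine ⟨w, ⟨hw, fun hww => hz.2 ?_⟩, rfl⟩
      rw [Set.mem_singleton_iff] at hww
      rw [hww]
      exact rfl
  · intro I hI
    have hI' : I ⊆ M.E \ {e} := hI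
    rw [del_indep_iff', del_indep_iff', h.2 I (hI'.trans diff_subset)]
    constructor
    · rintro ⟨hind, -⟩
      refine ⟨hind, ?_⟩
      rintro z ⟨w, hw, rfl⟩
      refine ⟨h.1.mapsTo ((hI' hw).1), fun hzz => (hI' hw).2 ?_⟩
      rw [Set.mem_singleton_iff] at hzz ⊢
      exact h.1.injOn (hI' hw).1 he hzz
    · rintro ⟨hind, -⟩
      exact ⟨hind, hI'⟩

lemma IsoFun.ctr (h : M.IsoFun N φ) (he : e ∈ M.E) :
    (M.ctr {e}).IsoFun (N.ctr {φ e}) φ :=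
  (h.dual.del he).dual

lemma sp_isoFun {M : Matroid α} (hsp : M.IsSeriesParallel) :
    ∀ (N : Matroid α) (φ : α → α), M.IsoFun N φ → N.IsSeriesParallel := by
  induction hsp with
  | loop e =>
    intro N φ h
    have hgr : N.E = {φ e} := by
      rw [← h.1.image_eq]
      show φ '' ({e} : Set α) = {φ e}
      rw [Set.image_singleton]
    have hNeq : N = loopyOn {φ e} := by
      rw [eq_loopyOn_iff]
      refine ⟨hgr, fun X hX hind => ?_⟩
      rcases Set.subset_singleton_iff_eq.mp (hX.trans hgr.subset) with h0 | h0
      · exact h0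
      · exfalso
        have : ({φ e} : Set α) = φ '' {e} := (Set.image_singleton).symm
        rw [h0, this] at hind
        have := (h.2 {e} Set.Subset.rfl).mpr hind
        rw [loopyOn_indep_iff] at this
        exact (Set.singleton_ne_empty e) this
    rw [hNeq]
    exact IsSeriesParallel.loop _
  | coloop e =>
    intro N φ h
    have hgr : N.E = {φ e} := by
      rw [← h.1.image_eq]
      show φ '' ({e} : Set α) = {φ e}
      rw [Set.image_singleton]
    have hNeq : N = freeOn {φ e} := by
      rw [eq_freeOn_iff]
      refine ⟨hgr, ?_⟩
      rw [show ({φ e} : Set α) = φ '' {e} from (Set.image_singleton).symm]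
      exact (h.2 {e} Set.Subset.rfl).mp (by rw [freeOn_indep_iff])

    rw [hNeq]
    exact IsSeriesParallel.coloop _
  | parallel hM0 hext ih =>
    intro N φ h
    obtain ⟨e, C, heE, hC, hC2, heC, hdel⟩ := hext
    have hCE := hC.subset_ground'
    have hiso : IsoFun _ (N.del {φ e}) φ := h.del heE
    rw [hdel] at hiso
    refine IsSeriesParallel.parallel (ih _ φ hiso)
      ⟨φ e, φ '' C, h.1.mapsTo heE, h.cct hC, ?_, Set.mem_image_of_mem φ heC, rfl⟩
    rw [Set.ncard_image_of_injOn (h.1.injOn.mono hCE)]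
    exact hC2
  | series hM0 hext ih =>
    intro N φ h
    obtain ⟨e, C, heE, hK, hC2, heC, hctr⟩ := hext
    have hiso : IsoFun _ (N.ctr {φ e}) φ := h.ctr heE
    rw [hctr] at hiso
    have hKc := h.dual.cct hK
    refine IsSeriesParallel.series (ih _ φ hiso)
      ⟨φ e, φ '' C, h.1.mapsTo heE, hKc, ?_, Set.mem_image_of_mem φ heC, rfl⟩
    rw [Set.ncard_image_of_injOn (h.dual.1.injOn.mono (IsCct.subset_ground' hK))]
    exact hC2

open Classical in
lemma isoFun_del_swap (hfin : M.Finite) (hC : M.IsCct {x, a}) (hxa : x ≠ a) :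
    (M.del {a}).IsoFun (M.del {x}) (fun z => if z = x then a else z) := by
  set φ : α → α := fun z => if z = x then a else z with hφ
  have hxE : x ∈ M.E := hC.subset_ground' (Set.mem_insert _ _)
  have haE : a ∈ M.E := hC.subset_ground' (Set.mem_insert_of_mem _ rfl)
  have hφx : φ x = a := if_pos rfl
  have hφz : ∀ z, z ≠ x → φ z = z := fun z hz => if_neg hz
  constructor
  · show Set.BijOn φ (M.E \ {a}) (M.E \ {x})
    refine ⟨?_, ?_, ?_⟩
    · intro z hz
      by_cases hzx : z = x
      · subst hzx
        rw [hφx]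
        exact ⟨haE, fun h => hxa (Set.mem_singleton_iff.mp h).symm⟩
      · rw [hφz z hzx]
        exact ⟨hz.1, fun h => hzx (Set.mem_singleton_iff.mp h)⟩
    · intro z1 h1 z2 h2 heq
      by_cases hz1 : z1 = x <;> by_cases hz2 : z2 = x
      · rw [hz1, hz2]
      · exfalso
        rw [hz1, hφx, hφz z2 hz2] at heq
        exact h2.2 (Set.mem_singleton_iff.mpr heq.symm)
      · exfalso
        rw [hz2, hφx, hφz z1 hz1] at heq
        exact h1.2 (Set.mem_singleton_iff.mpr heq)
      · rwa [hφz z1 hz1, hφz z2 hz2] at heq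
    · intro z hz
      by_cases hza : z = a
      · exact ⟨x, ⟨hxE, fun h => hxa.symm (Set.mem_singleton_iff.mp h).symm⟩, by rw [hφx, hza]⟩
      · exact ⟨z, ⟨hz.1, fun h => hza (Set.mem_singleton_iff.mp h)⟩,
          hφz z (fun h => hz.2 (Set.mem_singleton_iff.mpr h))⟩
  · intro I hI
    have hI' : I ⊆ M.E \ {a} := hI
    have haI : a ∉ I := fun h => (hI' h).2 rfl
    have hIE : I ⊆ M.E := hI'.trans diff_subset
    by_cases hxI : x ∈ I
    · have himg : φ '' I = insert a (I \ {x}) := by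
        apply subset_antisymm
        · rintro z ⟨w, hw, rfl⟩
          by_cases hwx : w = x
          · rw [hwx, hφx]
            exact Set.mem_insert _ _
          · rw [hφz w hwx]
            exact Set.mem_insert_of_mem _ ⟨hw, fun h => hwx (Set.mem_singleton_iff.mp h)⟩
        · rintro z (rfl | ⟨hz1, hz2⟩)
          · exact ⟨x, hxI, hφx⟩
          · exact ⟨z, hz1, hφz z (fun h => hz2 (Set.mem_singleton_iff.mpr h))⟩
      rw [himg, del_indep_iff', del_indep_iff']
      constructor
      · rintro ⟨hind, -⟩
        refine ⟨swap_indep hfin hC hxa hind hxI haI, ?_⟩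
        refine Set.insert_subset ⟨haE, fun h => hxa (Set.mem_singleton_iff.mp h).symm⟩ ?_
        intro z hz
        exact ⟨hIE hz.1, hz.2⟩
      · rintro ⟨hind, -⟩
        have hCsym : M.IsCct {a, x} := by rwa [Set.pair_comm] at hC
        have hamem : a ∈ insert a (I \ {x}) := Set.mem_insert _ _
        have hxmem : x ∉ insert a (I \ {x}) := by
          rintro (h | h)
          · exact hxa h
          · exact h.2 rfl
        have hswap := swap_indep hfin hCsym hxa.symm hind hamem hxmem
        rw [Set.insert_diff_self_of_notMem (fun h => haI h.1),
          Set.insert_diff_singleton, Set.insert_eq_self.mpr hxI] at hswap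
        exact ⟨hswap, hI'⟩
    · have himg : φ '' I = I := by
        apply subset_antisymm
        · rintro z ⟨w, hw, rfl⟩
          rw [hφz w (fun h => hxI (h ▸ hw))]
          exact hw
        · intro z hz
          exact ⟨z, hz, hφz z (fun h => hxI (h ▸ hz))⟩
      rw [himg, del_indep_iff', del_indep_iff']
      constructor
      · rintro ⟨hind, -⟩
        exact ⟨hind, Set.subset_diff_singleton hIE hxI⟩
      · rintro ⟨hind, -⟩
        exact ⟨hind, hI'⟩

end Matroid

namespace Matroid

variable {α : Type*} {M N : Matroid α} {B C C₁ C₂ D I J K X : Set α} {a b c e f g u v w x y : α}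

lemma connStep_symm (h : M.ConnStep e f) : M.ConnStep f e := by
  obtain ⟨C, hC, he, hf⟩ := h
  exact ⟨C, hC, hf, he⟩

lemma pair_extract (h2 : C.ncard = 2) (hx : x ∈ C) : ∃ cc, cc ≠ x ∧ C = {x, cc} := by
  obtain ⟨u', v', huv, rfl⟩ := Set.ncard_eq_two.mp h2
  rcases hx with rfl | hx
  · exact ⟨v', huv.symm, rfl⟩
  · rw [Set.mem_singleton_iff] at hx; subst hx
    exact ⟨u', huv, Set.pair_comm _ _⟩

lemma inter_pair_eq_singleton_left {s : Set α} (ha : a ∈ s) (hb : b ∉ s) (hab : a ≠ b) :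
    s ∩ {a, b} = {a} := by
  ext z
  simp only [Set.mem_inter_iff, Set.mem_insert_iff, Set.mem_singleton_iff]
  constructor
  · rintro ⟨hz, (rfl | rfl)⟩
    · rfl
    · exact absurd hz hb
  · rintro rfl
    exact ⟨ha, Or.inl rfl⟩

lemma cct_pair_elim (hfin : M.Finite) (h1 : M.IsCct {x, u}) (h2 : M.IsCct {x, v})
    (hxu : x ≠ u) (hxv : x ≠ v) (huv : u ≠ v) : M.IsCct {u, v} := by
  have hne : ({x, u} : Set α) ≠ {x, v} := by
    intro h
    have hu : u ∈ ({x, v} : Set α) := h ▸ Set.mem_insert_of_mem _ rfl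
    rcases hu with h' | h'
    · exact hxu h'.symm
    · exact huv (Set.mem_singleton_iff.mp h')
  obtain ⟨C₀, hsub, hC₀⟩ := cct_elim hfin h1 h2 hne (Set.mem_insert _ _) (Set.mem_insert _ _)
  have hsub' : C₀ ⊆ {u, v} := by
    intro z hz
    obtain ⟨hz1, hz2⟩ := hsub hz
    have hzx : z ≠ x := fun h => hz2 (Set.mem_singleton_iff.mpr h)
    rcases hz1 with (rfl | h') | (rfl | h')
    · exact absurd rfl hzx
    · rw [Set.mem_singleton_iff] at h'; subst h'
      exact Set.mem_insert _ _
    · exact absurd rfl hzx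
    · rw [Set.mem_singleton_iff] at h'; subst h'
      exact Set.mem_insert_of_mem _ rfl
  have hunl : M.Indep {u} := h1.indep_singleton_of_mem (Set.mem_insert_of_mem _ rfl)
    (Set.mem_insert _ _) hxu.symm
  have hvnl : M.Indep {v} := h2.indep_singleton_of_mem (Set.mem_insert_of_mem _ rfl)
    (Set.mem_insert _ _) hxv.symm
  exact (cct_subset_pair hC₀ hsub' hunl hvnl) ▸ hC₀

lemma sp_connected (hsp : M.IsSeriesParallel) :
    ∀ e ∈ M.E, ∀ f ∈ M.E, Relation.ReflTransGen M.ConnStep e f := by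
  induction hsp with
  | loop e0 =>
    intro e he f hf
    have he' : e = e0 := Set.mem_singleton_iff.mp he
    have hf' : f = e0 := Set.mem_singleton_iff.mp hf
    rw [he', hf']
  | coloop e0 =>
    intro e he f hf
    have he' : e = e0 := Set.mem_singleton_iff.mp he
    have hf' : f = e0 := Set.mem_singleton_iff.mp hf
    rw [he', hf']
  | @parallel M₀ M₁ hM0 hext ih =>
    obtain ⟨xx, C, hxE, hC, hC2, hxC, hdel⟩ := hext
    obtain ⟨cc, hccx, hCpair⟩ := pair_extract hC2 hxC
    have hccC : cc ∈ C := hCpair ▸ Set.mem_insert_of_mem _ rfl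
    have hstep : M₁.ConnStep xx cc := ⟨C, hC, hxC, hccC⟩
    have hmem : ∀ z ∈ M₁.E, z ≠ xx → z ∈ M₀.E := by
      intro z hz hzx
      rw [← hdel]
      exact ⟨hz, fun h => hzx (Set.mem_singleton_iff.mp h)⟩
    have hlift : ∀ u v, M₀.ConnStep u v → M₁.ConnStep u v := by
      rintro u v ⟨D, hD, hu, hv⟩
      rw [← hdel] at hD
      exact ⟨D, (cct_del_iff.mp hD).1, hu, hv⟩
    have hpath0 : ∀ u ∈ M₀.E, ∀ v ∈ M₀.E, Relation.ReflTransGen M₁.ConnStep u v :=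
      fun u hu v hv => Relation.ReflTransGen.mono (fun p q h => hlift p q h) u v (ih u hu v hv)
    have hccE : cc ∈ M₀.E := hmem cc (hC.subset_ground' hccC) hccx
    intro e he f hf
    by_cases hex : e = xx <;> by_cases hfx : f = xx
    · rw [hex, hfx]
    · subst hex
      exact (Relation.ReflTransGen.single hstep).trans (hpath0 cc hccE f (hmem f hf hfx))
    · subst hfx
      exact (hpath0 e (hmem e he hex) cc hccE).trans
        (Relation.ReflTransGen.single (connStep_symm hstep))
    · exact hpath0 e (hmem e he hex) f (hmem f hf hfx)
  | @series M₀ M₁ hM0 hext ih =>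
    have hsp₁ : M₁.IsSeriesParallel := IsSeriesParallel.series hM0 hext
    have hfin := sp_finite hsp₁
    obtain ⟨xx, K, hxE, hK, hK2, hxK, hctr⟩ := hext
    obtain ⟨gg, hggx, hKpair⟩ := pair_extract hK2 hxK
    have hK' : (M₁✶).IsCct K := hK
    have hxind : M₁.Indep {xx} := indep_singleton_of_mem_cocct hfin hK hxK
    have hmem : ∀ z ∈ M₁.E, z ≠ xx → z ∈ M₀.E := by
      intro z hz hzx
      rw [← hctr]
      exact ⟨hz, fun h => hzx (Set.mem_singleton_iff.mp h)⟩
    have hlift : ∀ u v, M₀.ConnStep u v → M₁.ConnStep u v := by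
      rintro u v ⟨D, hD, hu, hv⟩
      rw [← hctr] at hD
      rcases (cct_ctr_lift hfin hxind hD).1 with h | h
      · exact ⟨D, h, hu, hv⟩
      · exact ⟨insert xx D, h, Set.mem_insert_of_mem _ hu, Set.mem_insert_of_mem _ hv⟩
    have hpath0 : ∀ u ∈ M₀.E, ∀ v ∈ M₀.E, Relation.ReflTransGen M₁.ConnStep u v :=
      fun u hu v hv => Relation.ReflTransGen.mono (fun p q h => hlift p q h) u v (ih u hu v hv)
    -- find a circuit of M₁ through xx
    have hxdual : M₁✶.Indep {xx} := hK'.indep_singleton_of_mem hxK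
      (hKpair ▸ Set.mem_insert_of_mem _ rfl) hggx.symm
    rw [dual_indep_iff_exists'] at hxdual
    obtain ⟨-, Bb, hB, hdisj⟩ := hxdual
    have hxB : xx ∉ Bb := fun h => Set.disjoint_left.mp hdisj rfl h
    have hdep := (hB.insert_dep ⟨hxE, hxB⟩).1
    obtain ⟨T, hTsub, hT⟩ := exists_cct_of_dep hfin
      (Set.insert_subset hxE hB.subset_ground) hdep
    have hxT : xx ∈ T := by
      by_contra h
      exact hT.not_indep (hB.indep.subset (fun z hz =>
        (Set.mem_insert_iff.mp (hTsub hz)).resolve_left (fun h' => h (h' ▸ hz))))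
    obtain ⟨yy, hyT, hyx⟩ : ∃ y, y ∈ T ∧ y ≠ xx := by
      by_contra h
      push_neg at h
      exact hT.not_indep ((Set.eq_singleton_iff_unique_mem.mpr ⟨hxT, h⟩) ▸ hxind)
    have hstep : M₁.ConnStep xx yy := ⟨T, hT, hxT, hyT⟩
    have hyE : yy ∈ M₀.E := hmem yy (hT.subset_ground' hyT) hyx
    intro e he f hf
    by_cases hex : e = xx <;> by_cases hfx : f = xx
    · rw [hex, hfx]
    · subst hex
      exact (Relation.ReflTransGen.single hstep).trans (hpath0 yy hyE f (hmem f hf hfx))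
    · subst hfx
      exact (hpath0 e (hmem e he hex) yy hyE).trans
        (Relation.ReflTransGen.single (connStep_symm hstep))
    · exact hpath0 e (hmem e he hex) f (hmem f hf hfx)

lemma ground_eq_pair_of_cct_cocct {x g : α} (hfin : M.Finite) (hsp : M.IsSeriesParallel)
    (hC : M.IsCct {x, g}) (hK : M.IsCocct {x, g}) (hxg : x ≠ g) : M.E = {x, g} := by
  have hconn := sp_connected hsp
  have hxE : x ∈ M.E := hC.subset_ground' (Set.mem_insert _ _)
  have key : ∀ w z, M.ConnStep w z → w ∈ ({x, g} : Set α) → z ∈ ({x, g} : Set α) := by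
    rintro w z ⟨D, hD, hw, hz⟩ hwm
    have hpair : ({x, g} : Set α) ⊆ D := by
      have hxorg : x ∈ D ∨ g ∈ D := by
        rcases hwm with hwx | hwm
        · exact Or.inl (hwx ▸ hw)
        · exact Or.inr ((Set.mem_singleton_iff.mp hwm) ▸ hw)
      rcases hxorg with hxD | hgD
      · have hgD : g ∈ D := by
          by_contra hgD
          exact cct_cocct_inter (e := x) hfin hD hK (inter_pair_eq_singleton_left hxD hgD hxg)
        exact Set.insert_subset hxD (Set.singleton_subset_iff.mpr hgD)
      · have hxD : x ∈ D := by
          by_contra hxD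
          refine cct_cocct_inter (e := g) hfin hD hK ?_
          rw [Set.pair_comm]
          exact inter_pair_eq_singleton_left hgD hxD hxg.symm
        exact Set.insert_subset hxD (Set.singleton_subset_iff.mpr hgD)
    have hDeq : D = {x, g} := (hD.eq_of_dep_subset hpair hC.not_indep).symm
    rw [hDeq] at hz
    exact hz
  apply subset_antisymm
  · intro z hzE
    have hpath := hconn x hxE z hzE
    clear hzE
    induction hpath with
    | refl => exact Set.mem_insert _ _
    | tail hsteps hstep ihh => exact key _ _ hstep ihh
  · exact hC.subset_ground'

lemma del_eq_freeOn_pair (hC : M.IsCct {a, b}) (hab : a ≠ b) (hground : M.E = {a, b}) :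
    M.del {a} = freeOn {b} := by
  rw [eq_freeOn_iff]
  constructor
  · show M.E \ {a} = {b}
    rw [hground, Set.pair_diff_left hab]
  · refine del_indep_iff'.mpr ⟨hC.indep_singleton_of_mem (Set.mem_insert_of_mem _ rfl)
      (Set.mem_insert _ _) hab.symm, ?_⟩
    rw [hground, Set.pair_diff_left hab]

lemma sp_del_of_pair_cct {M : Matroid α} (hsp : M.IsSeriesParallel) :
    ∀ a b, M.IsCct {a, b} → a ≠ b → (M.del {a}).IsSeriesParallel := by
  induction hsp with
  | loop e0 =>
    intro a b hC hab
    exfalso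
    have hsub := hC.subset_ground'
    have h1 : a = e0 := Set.mem_singleton_iff.mp (hsub (Set.mem_insert _ _))
    have h2 : b = e0 := Set.mem_singleton_iff.mp (hsub (Set.mem_insert_of_mem _ rfl))
    exact hab (h1.trans h2.symm)
  | coloop e0 =>
    intro a b hC hab
    exact absurd (freeOn_indep_iff.mpr hC.subset_ground') hC.not_indep
  | @parallel M₀ M₁ hM0 hext ih =>
    intro a b hC hab
    have hsp₁ : M₁.IsSeriesParallel := IsSeriesParallel.parallel hM0 hext
    have hfin := sp_finite hsp₁
    obtain ⟨xx, C, hxE, hCx, hC2, hxC, hdel⟩ := hext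
    obtain ⟨cc, hccx, hCpair⟩ := pair_extract hC2 hxC
    have hCxx : M₁.IsCct {xx, cc} := hCpair ▸ hCx
    by_cases hax : a = xx
    · rw [hax, hdel]
      exact hM0
    · by_cases hbxeq : b = xx
      · have hCax : M₁.IsCct {a, xx} := by rw [← hbxeq]; exact hC
        by_cases hca : cc = a
        · have hiso := isoFun_del_swap hfin hCax hax
          rw [hdel] at hiso
          exact sp_isoFun hM0 _ _ hiso
        · have hC' : M₁.IsCct {xx, a} := by rwa [Set.pair_comm] at hCax
          have hacc : M₁.IsCct {a, cc} := cct_pair_elim hfin hC' hCxx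
            (fun h => hax h.symm) (fun h => hccx h.symm) (fun h => hca h.symm)
          have hC0 : M₀.IsCct {a, cc} := by
            rw [← hdel]
            refine cct_del_iff.mpr ⟨hacc, Set.disjoint_left.mpr ?_⟩
            rintro z (rfl | hz) hzx
            · exact hax (Set.mem_singleton_iff.mp hzx)
            · rw [Set.mem_singleton_iff] at hz; subst hz
              exact hccx (Set.mem_singleton_iff.mp hzx)
          have hSP0 := ih a cc hC0 (fun h => hca h.symm)
          refine IsSeriesParallel.parallel hSP0
            ⟨xx, {xx, cc}, ?_, ?_, Set.ncard_pair hccx.symm, Set.mem_insert _ _, ?_⟩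
          · exact ⟨hxE, fun h => hax (Set.mem_singleton_iff.mp h).symm⟩
          · refine cct_del_iff.mpr ⟨hCxx, Set.disjoint_left.mpr ?_⟩
            rintro z (rfl | hz) hzx
            · exact hax (Set.mem_singleton_iff.mp hzx).symm
            · rw [Set.mem_singleton_iff] at hz; subst hz
              exact hca (Set.mem_singleton_iff.mp hzx)
          · rw [del_comm, hdel]
      · have hC0 : M₀.IsCct {a, b} := by
          rw [← hdel]
          refine cct_del_iff.mpr ⟨hC, Set.disjoint_left.mpr ?_⟩
          rintro z (rfl | hz) hzx
          · exact hax (Set.mem_singleton_iff.mp hzx)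
          · rw [Set.mem_singleton_iff] at hz; subst hz
            exact hbxeq (Set.mem_singleton_iff.mp hzx)
        have hSP0 := ih a b hC0 hab
        by_cases hca : cc = a
        · have h1 : M₁.IsCct {a, xx} := by
            rw [← hca]
            rwa [Set.pair_comm] at hCxx
          have hxb : M₁.IsCct {xx, b} :=
            cct_pair_elim hfin h1 hC (fun h => hax h) hab (fun h => hbxeq h.symm)
          refine IsSeriesParallel.parallel hSP0
            ⟨xx, {xx, b}, ?_, ?_, Set.ncard_pair (fun h => hbxeq h.symm), Set.mem_insert _ _, ?_⟩
          · exact ⟨hxE, fun h => hax (Set.mem_singleton_iff.mp h).symm⟩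
          · refine cct_del_iff.mpr ⟨hxb, Set.disjoint_left.mpr ?_⟩
            rintro z (rfl | hz) hzx
            · exact hax (Set.mem_singleton_iff.mp hzx).symm
            · rw [Set.mem_singleton_iff] at hz; subst hz
              exact hab (Set.mem_singleton_iff.mp hzx).symm
          · rw [del_comm, hdel]
        · refine IsSeriesParallel.parallel hSP0
            ⟨xx, {xx, cc}, ?_, ?_, Set.ncard_pair hccx.symm, Set.mem_insert _ _, ?_⟩
          · exact ⟨hxE, fun h => hax (Set.mem_singleton_iff.mp h).symm⟩
          · refine cct_del_iff.mpr ⟨hCxx, Set.disjoint_left.mpr ?_⟩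
            rintro z (rfl | hz) hzx
            · exact hax (Set.mem_singleton_iff.mp hzx).symm
            · rw [Set.mem_singleton_iff] at hz; subst hz
              exact hca (Set.mem_singleton_iff.mp hzx)
          · rw [del_comm, hdel]
  | @series M₀ M₁ hM0 hext ih =>
    intro a b hC hab
    have hsp₁ : M₁.IsSeriesParallel := IsSeriesParallel.series hM0 hext
    have hfin := sp_finite hsp₁
    obtain ⟨xx, K, hxE, hK, hK2, hxK, hctr⟩ := hext
    obtain ⟨gg, hggx, hKpair⟩ := pair_extract hK2 hxK
    have hKc : M₁.IsCocct {xx, gg} := hKpair ▸ hK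
    have hKc' : (M₁✶).IsCct {xx, gg} := hKc
    have hxind : M₁.Indep {xx} := indep_singleton_of_mem_cocct hfin hKc (Set.mem_insert _ _)
    have haE : a ∈ M₁.E := hC.subset_ground' (Set.mem_insert _ _)
    by_cases hmemx : xx ∈ ({a, b} : Set α)
    · -- {a, b} = {xx, gg} is both a circuit and a cocircuit
      have hgg : gg ∈ ({a, b} : Set α) := by
        by_contra hgm
        exact cct_cocct_inter (e := xx) hfin hC hKc
          (inter_pair_eq_singleton_left hmemx hgm (fun h => hggx h.symm))
      have hsub : ({xx, gg} : Set α) ⊆ {a, b} :=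
        Set.insert_subset hmemx (Set.singleton_subset_iff.mpr hgg)
      have hEq : ({xx, gg} : Set α) = {a, b} := Set.eq_of_subset_of_ncard_le hsub
        (by rw [Set.ncard_pair hab, Set.ncard_pair (fun h => hggx h.symm)])
      have hcocc : M₁.IsCocct {a, b} := hEq ▸ hKc
      have hground : M₁.E = {a, b} := ground_eq_pair_of_cct_cocct hfin hsp₁ hC hcocc hab
      rw [del_eq_freeOn_pair hC hab hground]
      exact IsSeriesParallel.coloop b
    · have hax : a ≠ xx := fun h => hmemx (h ▸ Set.mem_insert _ _)
      have hbx : b ≠ xx := fun h => hmemx (h ▸ Set.mem_insert_of_mem _ rfl)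
      have hgm : gg ∉ ({a, b} : Set α) := by
        intro hgg
        refine cct_cocct_inter (e := gg) hfin hC hKc ?_
        rw [Set.pair_comm xx gg]
        exact inter_pair_eq_singleton_left hgg (fun h => hmemx h) hggx
      have hga : gg ≠ a := fun h => hgm (h ▸ Set.mem_insert _ _)
      have hgb : gg ≠ b := fun h => hgm (h ▸ Set.mem_insert_of_mem _ rfl)
      have hanl : M₁.Indep {a} := hC.indep_singleton_of_mem (Set.mem_insert _ _)
        (Set.mem_insert_of_mem _ rfl) hab
      have hbnl : M₁.Indep {b} := hC.indep_singleton_of_mem (Set.mem_insert_of_mem _ rfl)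
        (Set.mem_insert _ _) hab.symm
      have hxa_ind : M₁.Indep {xx, a} := by
        refine indep_pair_of_not_cct hfin hxind hanl (fun hcct => ?_)
        refine cct_cocct_inter (e := xx) hfin hcct hKc ?_
        exact inter_pair_eq_singleton_left (Set.mem_insert _ _)
          (by rintro (h | h)
              · exact hggx h
              · exact hga (Set.mem_singleton_iff.mp h)) (fun h => hggx h.symm)
      have hxb_ind : M₁.Indep {xx, b} := by
        refine indep_pair_of_not_cct hfin hxind hbnl (fun hcct => ?_)
        refine cct_cocct_inter (e := xx) hfin hcct hKc ?_
        exact inter_pair_eq_singleton_left (Set.mem_insert _ _)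
          (by rintro (h | h)
              · exact hggx h
              · exact hgb (Set.mem_singleton_iff.mp h)) (fun h => hggx h.symm)
      have hC0 : M₀.IsCct {a, b} := by
        rw [← hctr]
        exact pair_cct_ctr_of hC hab hxind hmemx hxa_ind hxb_ind
      have hSP0 := ih a b hC0 hab
      refine IsSeriesParallel.series hSP0
        ⟨xx, {xx, gg}, ?_, ?_, Set.ncard_pair (fun h => hggx h.symm), Set.mem_insert _ _, ?_⟩
      · exact ⟨hxE, fun h => hax (Set.mem_singleton_iff.mp h).symm⟩
      · show ((M₁.del {a})✶).IsCct {xx, gg}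
        rw [dual_del']
        have hadual : M₁✶.Indep {a} := hC.dual_indep_of_mem hfin (Set.mem_insert _ _)
        have hxdual : M₁✶.Indep {xx} := hKc'.indep_singleton_of_mem (Set.mem_insert _ _)
          (Set.mem_insert_of_mem _ rfl) (fun h => hggx h.symm)
        have hgdual : M₁✶.Indep {gg} := hKc'.indep_singleton_of_mem
          (Set.mem_insert_of_mem _ rfl) (Set.mem_insert _ _) hggx
        have hfind := finite_dual hfin
        have h1 : M₁✶.Indep {a, xx} := by
          refine indep_pair_of_not_cct hfind hadual hxdual (fun hcct => ?_)
          exact cct_cocct_inter (e := a) hfin hC (show M₁.IsCocct {a, xx} from hcct)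
            (inter_pair_eq_singleton_left (Set.mem_insert _ _) hmemx hax)
        have h2 : M₁✶.Indep {a, gg} := by
          refine indep_pair_of_not_cct hfind hadual hgdual (fun hcct => ?_)
          exact cct_cocct_inter (e := a) hfin hC (show M₁.IsCocct {a, gg} from hcct)
            (inter_pair_eq_singleton_left (Set.mem_insert _ _) hgm (fun h => hga h.symm))
        exact pair_cct_ctr_of hKc' (fun h => hggx h.symm) hadual
          (by rintro (h | h)
              · exact hax h
              · exact hga (Set.mem_singleton_iff.mp h).symm)
          h1 h2
      · rw [← hctr]
        exact ctr_del_comm hxind hax haE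

end Matroid

namespace Matroid

variable {α : Type*} {M N : Matroid α} {B C C₁ C₂ D I J K X : Set α} {a b c e f g u v w x y : α}

lemma pair_cct_ctr_mem_g (hfin : M.Finite) (hs : M.Simple') (hK : M.IsCocct {e, g}) (heg : e ≠ g)
    (hC : (M.ctr {e}).IsCct {u, v}) (huv : u ≠ v) : g = u ∨ g = v := by
  have hK' : (M✶).IsCct {e, g} := hK
  have heE : e ∈ M.E := hK'.subset_ground' (Set.mem_insert _ _)
  have heind : M.Indep {e} := indep_singleton_of_mem_cocct hfin hK (Set.mem_insert _ _)
  have hsub : ({u, v} : Set α) ⊆ M.E \ {e} := hC.subset_ground'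
  have huE : u ∈ M.E := (hsub (Set.mem_insert _ _)).1
  have hvE : v ∈ M.E := (hsub (Set.mem_insert_of_mem _ rfl)).1
  rcases (cct_ctr_lift hfin heind hC).1 with h | h
  · exact absurd (hs.2 u huE v hvE huv) h.not_indep
  · by_contra hgm
    push_neg at hgm
    refine cct_cocct_inter (e := e) hfin h hK ?_
    ext z
    simp only [Set.mem_inter_iff, Set.mem_insert_iff, Set.mem_singleton_iff]
    constructor
    · rintro ⟨h1, h2⟩
      rcases h2 with rfl | h2
      · rfl
      · exfalso
        subst h2
        rcases h1 with h1 | h1 | h1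
        · exact heg h1.symm
        · exact hgm.1 h1
        · exact hgm.2 (Set.mem_singleton_iff.mp h1)
    · rintro rfl
      exact ⟨Or.inl rfl, Or.inl rfl⟩

lemma ctr_pair_cct_unique (hfin : M.Finite) (hs : M.Simple') (hK : M.IsCocct {e, g}) (heg : e ≠ g)
    (h1 : (M.ctr {e}).IsCct {g, u}) (h2 : (M.ctr {e}).IsCct {g, v})
    (hug : u ≠ g) (hvg : v ≠ g) (huv : u ≠ v) : False := by
  have hfin' : (M.ctr {e}).Finite := finite_ctr hfin _
  have hul : (M.ctr {e}).Indep {u} := h1.indep_singleton_of_mem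
    (Set.mem_insert_of_mem _ rfl) (Set.mem_insert _ _) hug
  have hvl : (M.ctr {e}).Indep {v} := h2.indep_singleton_of_mem
    (Set.mem_insert_of_mem _ rfl) (Set.mem_insert _ _) hvg
  have hne : ({g, u} : Set α) ≠ {g, v} := by
    intro h
    have hu : u ∈ ({g, v} : Set α) := h ▸ Set.mem_insert_of_mem _ rfl
    rcases hu with h' | h'
    · exact hug h'
    · exact huv (Set.mem_singleton_iff.mp h')
  obtain ⟨C₀, hsub, hC₀⟩ := cct_elim hfin' h1 h2 hne (Set.mem_insert _ _) (Set.mem_insert _ _)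
  have hsub' : C₀ ⊆ {u, v} := by
    intro z hz
    obtain ⟨hz1, hz2⟩ := hsub hz
    have hzg : z ≠ g := fun h => hz2 (Set.mem_singleton_iff.mpr h)
    rcases hz1 with (rfl | h') | (rfl | h')
    · exact absurd rfl hzg
    · rw [Set.mem_singleton_iff] at h'; subst h'
      exact Set.mem_insert _ _
    · exact absurd rfl hzg
    · rw [Set.mem_singleton_iff] at h'; subst h'
      exact Set.mem_insert_of_mem _ rfl
  have hCuv : C₀ = {u, v} := cct_subset_pair hC₀ hsub' hul hvl
  rcases pair_cct_ctr_mem_g hfin hs hK heg (hCuv ▸ hC₀) huv with h | h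
  · exact hug h.symm
  · exact hvg h.symm

lemma exists_partner {N : Matroid α} (hfin : M.Finite) (hs : M.Simple')
    (hK : M.IsCocct {e, g}) (heg : e ≠ g) (hctr : M.ctr {e} = N) (hNloop : N.Loopless')
    (hNnots : ¬ N.Simple') : ∃ w, w ≠ g ∧ N.IsCct {w, g} := by
  have hex : ∃ u v, u ∈ N.E ∧ v ∈ N.E ∧ u ≠ v ∧ ¬ N.Indep {u, v} := by
    by_contra hno
    push_neg at hno
    exact hNnots ⟨hNloop, fun u hu v hv huv => hno u v hu hv huv⟩
  obtain ⟨u, v, hu, hv, huv, hdep⟩ := hex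
  have hcct : N.IsCct {u, v} := pair_cct_of_dep hNloop hu hv huv hdep
  have hcct' : (M.ctr {e}).IsCct {u, v} := by rw [hctr]; exact hcct
  rcases pair_cct_ctr_mem_g hfin hs hK heg hcct' huv with h | h
  · refine ⟨v, fun hh => huv (hh.trans h).symm, ?_⟩
    rw [Set.pair_comm, h]
    exact hcct
  · refine ⟨u, fun hh => huv (hh.trans h), ?_⟩
    rw [h]
    exact hcct

lemma del_partner_simple {N : Matroid α} (hfin : M.Finite) (hs : M.Simple')
    (hK : M.IsCocct {e, g}) (heg : e ≠ g) (hctr : M.ctr {e} = N) (hNloop : N.Loopless')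
    (hwcct : N.IsCct {w, g}) (hwg : w ≠ g) : (N.del {w}).Simple' := by
  refine ⟨loopless_del hNloop _, fun p hp q hq hpq => ?_⟩
  have hp' : p ∈ N.E \ {w} := hp
  have hq' : q ∈ N.E \ {w} := hq
  by_contra hdep'
  have hdepN : ¬ N.Indep {p, q} := fun h => hdep' (del_indep_iff'.mpr
    ⟨h, Set.insert_subset hp' (Set.singleton_subset_iff.mpr hq')⟩)
  have hcct2 : N.IsCct {p, q} := pair_cct_of_dep hNloop hp'.1 hq'.1 hpq hdepN
  have hcct2' : (M.ctr {e}).IsCct {p, q} := by rw [hctr]; exact hcct2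
  have hgm2 : g = p ∨ g = q := pair_cct_ctr_mem_g hfin hs hK heg hcct2' hpq
  have hwc' : (M.ctr {e}).IsCct {g, w} := by
    rw [hctr]
    rwa [Set.pair_comm] at hwcct
  rcases hgm2 with h | h
  · have hc2' : (M.ctr {e}).IsCct {g, q} := by rw [h]; exact hcct2'
    exact ctr_pair_cct_unique hfin hs hK heg hwc' hc2' hwg
      (fun hh => hpq (hh.trans h).symm)
      (fun hh => hq'.2 (Set.mem_singleton_iff.mpr hh.symm))
  · have hc2' : (M.ctr {e}).IsCct {g, p} := by
      rw [h]
      rwa [Set.pair_comm] at hcct2'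
    exact ctr_pair_cct_unique hfin hs hK heg hwc' hc2' hwg
      (fun hh => hpq (hh.trans h))
      (fun hh => hp'.2 (Set.mem_singleton_iff.mpr hh.symm))

lemma simple_sp_card (n : ℕ) : ∀ M : Matroid α, M.IsSeriesParallel → M.Simple' →
    M.E.ncard = n → M.E.ncard ≤ 2 * M.rank - 1 := by
  induction n using Nat.strong_induction_on with
  | _ n ih =>
    intro M hsp hs hn
    have hfin := sp_finite hsp
    obtain ⟨a0, ha0⟩ := sp_nonempty hsp
    have h1r : 1 ≤ M.rank := one_le_rank hfin (hs.1 a0 ha0)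
    by_cases hsmall : M.E.ncard ≤ 1
    · omega
    · push_neg at hsmall
      obtain ⟨a1, b1, ha1, hb1, hab1⟩ :=
        (Set.one_lt_ncard_iff hfin.ground_finite).mp hsmall
      have h2r : 2 ≤ M.rank := two_le_rank hfin hs ha1 hb1 hab1
      cases hsp with
      | loop e0 =>
        have hcard1 : (loopyOn {e0} : Matroid α).E.ncard = 1 := Set.ncard_singleton e0
        omega
      | coloop e0 =>
        have hcard1 : (freeOn {e0} : Matroid α).E.ncard = 1 := Set.ncard_singleton e0
        omega
      | @parallel N Mx hM0 hext =>
        exfalso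
        obtain ⟨xx, C, hxE, hCx, hC2, hxC, hdel⟩ := hext
        obtain ⟨cc, hccx, hCpair⟩ := pair_extract hC2 hxC
        have hccE : cc ∈ M.E := hCx.subset_ground' (hCpair ▸ Set.mem_insert_of_mem _ rfl)
        exact (hCpair ▸ hCx).not_indep (hs.2 xx hxE cc hccE (fun h => hccx h.symm))
      | @series N Mx hM0 hext =>
        obtain ⟨xx, K, hxE, hK, hK2, hxK, hctr⟩ := hext
        obtain ⟨gg, hggx, hKpair⟩ := pair_extract hK2 hxK
        have hKc : M.IsCocct {xx, gg} := hKpair ▸ hK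
        have hxind : M.Indep {xx} := hs.1 xx hxE
        have hNfin : N.Finite := sp_finite hM0
        have hrk : N.rank + 1 = M.rank := by
          rw [← hctr]
          exact rank_ctr_add_one hfin hxind
        have hNloop : N.Loopless' := by
          rw [← hctr]
          exact loopless_ctr_of_simple hs hxE
        have hNcard : N.E.ncard = n - 1 := by
          rw [← hctr]
          show (M.E \ {xx}).ncard = n - 1
          rw [Set.ncard_diff_singleton_of_mem hxE, hn]
        have hxgne : xx ≠ gg := fun h => hggx h.symm
        by_cases hNs : N.Simple'
        · have hb := ih (N.E.ncard) (by omega) N hM0 hNs rfl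
          omega
        · obtain ⟨ww, hwgg, hwcct⟩ := exists_partner hfin hs hKc hxgne hctr hNloop hNs
          have hSP0 : (N.del {ww}).IsSeriesParallel := sp_del_of_pair_cct hM0 ww gg hwcct hwgg
          have h0simple : (N.del {ww}).Simple' :=
            del_partner_simple hfin hs hKc hxgne hctr hNloop hwcct hwgg
          have h0rank : (N.del {ww}).rank = N.rank := rank_del_eq hNfin hwcct hwgg
          have hwE : ww ∈ N.E := hwcct.subset_ground' (Set.mem_insert _ _)
          have h0card : (N.del {ww}).E.ncard = n - 2 := by
            show (N.E \ {ww}).ncard = n - 2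
            rw [Set.ncard_diff_singleton_of_mem hwE, hNcard]
            omega
          have hb := ih ((N.del {ww}).E.ncard) (by omega) _ hSP0 h0simple rfl
          omega

end Matroid

/-- Every simple series-parallel matroid of rank `k ≥ 2` on a ground set of size `2k - 1`
is obtained from a simple series-parallel matroid of rank `k - 1` on a ground set of size
`2k - 3` by a parallel extension followed by a series extension. -/
theorem simple_sp_inductive_structure {α : Type*} (k : ℕ) (hk : 2 ≤ k)
    (M : Matroid α) (hfin : M.Finite) (hs : M.Simple') (hsp : M.IsSeriesParallel)
    (hr : M.rank = k) (hn : M.E.ncard = 2 * k - 1) :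
    ∃ M₀ M₁ : Matroid α, M₀.Simple' ∧ M₀.IsSeriesParallel ∧ M₀.rank = k - 1 ∧
      M₀.E.ncard = 2 * k - 3 ∧ M₀.IsParallelExt M₁ ∧ M₁.IsSeriesExt M := by
  cases hsp with
  | loop e0 =>
    exfalso
    have h1 : ({e0} : Set α).ncard = 1 := Set.ncard_singleton e0
    have hn' : ({e0} : Set α).ncard = 2 * k - 1 := hn
    omega
  | coloop e0 =>
    exfalso
    have h1 : ({e0} : Set α).ncard = 1 := Set.ncard_singleton e0
    have hn' : ({e0} : Set α).ncard = 2 * k - 1 := hn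
    omega
  | @parallel N Mx hM0 hext =>
    exfalso
    obtain ⟨xx, C, hxE, hCx, hC2, hxC, hdel⟩ := hext
    obtain ⟨cc, hccx, hCpair⟩ := Matroid.pair_extract hC2 hxC
    have hccE : cc ∈ M.E := hCx.subset_ground' (hCpair ▸ Set.mem_insert_of_mem _ rfl)
    exact (hCpair ▸ hCx).not_indep (hs.2 xx hxE cc hccE (fun h => hccx h.symm))
  | @series N Mx hM0 hext =>
    obtain ⟨ee, K, heE, hK, hK2, heK, hctr⟩ := hext
    obtain ⟨gg, hgge, hKpair⟩ := Matroid.pair_extract hK2 heK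
    have hKc : M.IsCocct {ee, gg} := hKpair ▸ hK
    have hegne : ee ≠ gg := fun h => hgge h.symm
    have heind : M.Indep {ee} := hs.1 ee heE
    have hNfin : N.Finite := Matroid.sp_finite hM0
    have hrk : N.rank + 1 = M.rank := by
      rw [← hctr]
      exact Matroid.rank_ctr_add_one hfin heind
    have hNloop : N.Loopless' := by
      rw [← hctr]
      exact Matroid.loopless_ctr_of_simple hs heE
    have hNcard : N.E.ncard = 2 * k - 2 := by
      rw [← hctr]
      show (M.E \ {ee}).ncard = 2 * k - 2
      rw [Set.ncard_diff_singleton_of_mem heE, hn]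
      omega
    have hNnots : ¬ N.Simple' := by
      intro hNs
      have hb := Matroid.simple_sp_card (N.E.ncard) N hM0 hNs rfl
      omega
    obtain ⟨ww, hwgg, hwcct⟩ :=
      Matroid.exists_partner hfin hs hKc hegne hctr hNloop hNnots
    have hwE : ww ∈ N.E := hwcct.subset_ground' (Set.mem_insert _ _)
    refine ⟨N.del {ww}, N,
      Matroid.del_partner_simple hfin hs hKc hegne hctr hNloop hwcct hwgg,
      Matroid.sp_del_of_pair_cct hM0 ww gg hwcct hwgg, ?_, ?_, ?_, ?_⟩
    · have h0 := Matroid.rank_del_eq hNfin hwcct hwgg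
      omega
    · show (N.E \ {ww}).ncard = 2 * k - 3
      rw [Set.ncard_diff_singleton_of_mem hwE, hNcard]
      omega
    · exact ⟨ww, {ww, gg}, hwE, hwcct, Set.ncard_pair hwgg, Set.mem_insert _ _, rfl⟩
    · exact ⟨ee, {ee, gg}, heE, hKc, Set.ncard_pair hegne, Set.mem_insert _ _, hctr⟩
end
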